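/- arXiv:math/0608479 — 5 statements merged into one kernel-verified Lean document; each statement's English description precedes it below -/
import Mathlib

section
/- Let (F,d) be a differential field of characteristic zero, g ∈ F a nonzero element, and δ = g⁻¹d. Then for every natural number k ≥ 1, dᵏ = Σ_{i=1}^{k} Φᵏᵢ(g) δⁱ as operators, where Φᵏᵢ(g) = Σ_α C_α g^{α₁}(dg)^{α₂}⋯(d^{k-1}g)^{α_k}, the sum taken over all tuples α = (α₁,...,α_k) of nonnegative integers with α₁+⋯+α_k = i and 1·α₁+2·α₂+⋯+k·α_k = k, and C_α = k!/(α₁!⋯α_k!·∏_{j=1}^{k}(j!)^{α_j}). -/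
open Finset

/-- The coefficient `Φᵏᵢ(g) = Σ_α C_α g^{α₁}(dg)^{α₂}⋯(d^{k-1}g)^{α_k}`, the sum over all
tuples `α = (α₁,…,α_k)` of nonnegative integers with `Σ α_j = i` and `Σ j·α_j = k`,
where `C_α = k!/(α₁!⋯α_k!·∏ⱼ (j!)^{α_j})`.  (Each `α_j ≤ k`, so we may index the sum by
functions `Fin k → Fin (k+1)`.) -/
noncomputable def Phi {F : Type} [Field F] [CharZero F] (d : F → F) (g : F) (k i : ℕ) : F :=
  ∑ α ∈ (Finset.univ : Finset (Fin k → Fin (k + 1))).filter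
      (fun α => (∑ j : Fin k, (α j : ℕ)) = i ∧ (∑ j : Fin k, ((j : ℕ) + 1) * (α j : ℕ)) = k),
    (((Nat.factorial k : ℚ) /
        ((∏ j : Fin k, (Nat.factorial (α j : ℕ) : ℚ)) *
          ∏ j : Fin k, (Nat.factorial ((j : ℕ) + 1) : ℚ) ^ (α j : ℕ))) : ℚ) •
      ∏ j : Fin k, (d^[(j : ℕ)] g) ^ (α j : ℕ)

set_option linter.unusedSectionVars false

section
variable {F : Type} [Field F] [CharZero F] (d : F → F)
variable (hd_add : ∀ a b : F, d (a + b) = d a + d b)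
variable (hd_mul : ∀ a b : F, d (a * b) = d a * b + a * d b)

include hd_add in
lemma d_zero' : d 0 = 0 := by
  have := hd_add 0 0
  simpa using this

include hd_mul in
lemma d_one' : d 1 = 0 := by
  have := hd_mul 1 1
  simp at this
  exact this

include hd_add in
lemma d_neg' (x : F) : d (-x) = - d x := by
  have h := hd_add x (-x)
  simp only [add_neg_cancel] at h
  rw [d_zero' d hd_add] at h
  linear_combination -h

include hd_add hd_mul in
lemma d_nat' (n : ℕ) : d (n : F) = 0 := by
  induction n with
  | zero => simpa using d_zero' d hd_add
  | succ n ih => push_cast; rw [hd_add, ih, d_one' d hd_mul]; ring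

include hd_add hd_mul in
lemma d_int' (n : ℤ) : d (n : F) = 0 := by
  rcases le_or_gt 0 n with h | h
  · lift n to ℕ using h
    exact_mod_cast d_nat' d hd_add hd_mul n
  · obtain ⟨m, rfl⟩ : ∃ m : ℕ, n = -(m:ℤ) := ⟨(-n).toNat, by omega⟩
    have h2 : ((-(m:ℤ) : ℤ) : F) = -((m : ℕ) : F) := by push_cast; ring
    rw [h2, d_neg' d hd_add, d_nat' d hd_add hd_mul]
    ring

include hd_add hd_mul in
lemma d_inv' (a : F) (ha : a ≠ 0) (h : d a = 0) : d a⁻¹ = 0 := by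
  have h1 : a * d a⁻¹ = 0 := by
    have h2 := hd_mul a a⁻¹
    rw [mul_inv_cancel₀ ha, d_one' d hd_mul, h] at h2
    linear_combination -h2
  exact (mul_eq_zero.1 h1).resolve_left ha

include hd_add hd_mul in
lemma d_rat' (q : ℚ) : d ((q : F)) = 0 := by
  rw [Rat.cast_def, div_eq_mul_inv, hd_mul, d_int' d hd_add hd_mul,
    d_inv' d hd_add hd_mul _ (Nat.cast_ne_zero.2 q.den_nz) (d_nat' d hd_add hd_mul _)]
  ring

include hd_add hd_mul in
lemma d_qsmul' (q : ℚ) (x : F) : d (q • x) = q • d x := by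
  rw [Rat.smul_def, Rat.smul_def, hd_mul, d_rat' d hd_add hd_mul]
  ring

include hd_add in
lemma d_sum' {ι : Type*} (s : Finset ι) (f : ι → F) :
    d (∑ t ∈ s, f t) = ∑ t ∈ s, d (f t) := by
  classical
  induction s using Finset.induction_on with
  | empty => simpa using d_zero' d hd_add
  | insert _ _ h ih => rw [Finset.sum_insert h, Finset.sum_insert h, hd_add, ih]

include hd_mul in
lemma d_prod' {ι : Type*} [DecidableEq ι] (s : Finset ι) (f : ι → F) :
    d (∏ t ∈ s, f t) = ∑ t ∈ s, d (f t) * ∏ u ∈ s.erase t, f u := by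
  induction s using Finset.induction_on with
  | empty => simpa using d_one' d hd_mul
  | @insert a s h ih =>
      rw [Finset.prod_insert h, hd_mul, ih, Finset.sum_insert h, Finset.erase_insert h,
        Finset.mul_sum]
      congr 1
      refine Finset.sum_congr rfl fun t ht => ?_
      rw [Finset.erase_insert_of_ne (by rintro rfl; exact h ht),
        Finset.prod_insert (fun hc => h (Finset.mem_of_mem_erase hc))]
      ring

include hd_mul in
lemma d_pow' (x : F) (n : ℕ) : d (x ^ n) = (n : F) * x ^ (n - 1) * d x := by
  induction n with
  | zero => simpa using d_one' d hd_mul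
  | succ n ih =>
      rcases Nat.eq_zero_or_pos n with rfl | hn
      · simp
      · have hx : x * x ^ (n-1) = x ^ n := by
          rw [← pow_succ']
          congr 1
          omega
        rw [pow_succ, hd_mul, ih]
        push_cast [Nat.add_sub_cancel]
        linear_combination ((n : F) * d x) * hx
end



namespace Stmt1Aux
variable {F : Type} [Field F] [CharZero F] (d : F → F) (g : F)

noncomputable def mono (α : ℕ →₀ ℕ) : F := α.prod fun s m => (d^[s] g) ^ m

noncomputable def den (α : ℕ →₀ ℕ) : ℚ :=
  α.prod fun s m => (m.factorial : ℚ) * ((s+1).factorial : ℚ) ^ m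

def cnt (α : ℕ →₀ ℕ) : ℕ := α.sum fun _ m => m
def wt (α : ℕ →₀ ℕ) : ℕ := α.sum fun s m => (s+1) * m

def A (k i : ℕ) : Finset (ℕ →₀ ℕ) :=
  ((Finset.range k).finsuppAntidiag i).filter fun α => wt α = k

noncomputable def P (k i : ℕ) : F :=
  ∑ α ∈ A k i, ((k.factorial : ℚ) / den α) • mono d g α

lemma den_pos (α : ℕ →₀ ℕ) : 0 < den α := by
  refine Finset.prod_pos fun s _ => ?_
  positivity

lemma supp_subset_of_wt {α : ℕ →₀ ℕ} {k : ℕ} (h : wt α = k) : α.support ⊆ Finset.range k := by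
  intro s hs
  rw [Finset.mem_range]
  have h1 : 1 ≤ α s := Nat.one_le_iff_ne_zero.2 (Finsupp.mem_support_iff.1 hs)
  have h2 : (s+1) * α s ≤ wt α := by
    rw [wt, Finsupp.sum]
    exact Finset.single_le_sum (f := fun u => (u+1) * α u) (fun _ _ => Nat.zero_le _) hs
  have h3 : (s+1) * 1 ≤ (s+1) * α s := Nat.mul_le_mul_left _ h1
  omega

lemma mem_A {α : ℕ →₀ ℕ} {k i : ℕ} : α ∈ A k i ↔ cnt α = i ∧ wt α = k := by
  constructor
  · rintro h
    rw [A, Finset.mem_filter, Finset.mem_finsuppAntidiag'] at h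
    exact ⟨h.1.1, h.2⟩
  · rintro ⟨h1, h2⟩
    rw [A, Finset.mem_filter, Finset.mem_finsuppAntidiag']
    exact ⟨⟨h1, supp_subset_of_wt h2⟩, h2⟩

end Stmt1Aux

namespace Stmt1Aux
variable {F : Type} [Field F] [CharZero F] (d : F → F) (g : F)

lemma cnt_add_single (γ : ℕ →₀ ℕ) (t : ℕ) : cnt (γ + Finsupp.single t 1) = cnt γ + 1 := by
  rw [cnt, Finsupp.sum_add_index' (fun _ => rfl) (fun _ _ _ => rfl), Finsupp.sum_single_index rfl]
  rfl

lemma wt_add_single (γ : ℕ →₀ ℕ) (t : ℕ) : wt (γ + Finsupp.single t 1) = wt γ + (t+1) := by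
  rw [wt, Finsupp.sum_add_index' (fun s => by simp) (fun s a b => by ring),
    Finsupp.sum_single_index (by simp)]
  rw [mul_one]
  rfl

lemma sub_add_single_cancel {γ : ℕ →₀ ℕ} {t : ℕ} (h : 1 ≤ γ t) :
    γ - Finsupp.single t 1 + Finsupp.single t 1 = γ := by
  ext u
  simp only [Finsupp.add_apply, Finsupp.tsub_apply, Finsupp.single_apply]
  by_cases hu : t = u
  · subst hu; simp; omega
  · simp [hu]

lemma den_superset {γ : ℕ →₀ ℕ} {T : Finset ℕ} (h : γ.support ⊆ T) :
    den γ = ∏ u ∈ T, ((γ u).factorial : ℚ) * ((u+1).factorial : ℚ) ^ (γ u) :=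
  Finsupp.prod_of_support_subset γ h _ (fun u _ => by simp)

lemma mono_superset {γ : ℕ →₀ ℕ} {T : Finset ℕ} (h : γ.support ⊆ T) :
    mono d g γ = ∏ u ∈ T, (d^[u] g) ^ (γ u) :=
  Finsupp.prod_of_support_subset γ h _ (fun u _ => by simp)

lemma den_shift (γ : ℕ →₀ ℕ) (t : ℕ) :
    den (γ + Finsupp.single t 1) = ((γ t : ℚ) + 1) * ((t+1).factorial : ℚ) * den γ := by
  classical
  set T : Finset ℕ := insert t γ.support with hT
  have hsub : γ.support ⊆ T := Finset.subset_insert _ _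
  have hsub2 : (γ + Finsupp.single t 1).support ⊆ T := by
    refine (Finsupp.support_add).trans ?_
    refine Finset.union_subset hsub ?_
    refine (Finsupp.support_single_subset).trans ?_
    simp [hT]
  have ht : t ∈ T := Finset.mem_insert_self _ _
  rw [den_superset hsub, den_superset hsub2, ← Finset.mul_prod_erase T _ ht,
    ← Finset.mul_prod_erase T (fun u => ((γ u).factorial : ℚ) * ((u+1).factorial : ℚ) ^ (γ u)) ht]
  have hrest : ∀ u ∈ T.erase t,
      ((((γ + Finsupp.single t 1 : ℕ →₀ ℕ) u)).factorial : ℚ) * ((u+1).factorial : ℚ) ^ (((γ + Finsupp.single t 1 : ℕ →₀ ℕ) u))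
        = ((γ u).factorial : ℚ) * ((u+1).factorial : ℚ) ^ (γ u) := by
    intro u hu
    have : ((γ + Finsupp.single t 1 : ℕ →₀ ℕ) u) = γ u := by
      simp [Finsupp.single_apply, (Finset.ne_of_mem_erase hu).symm]
    rw [this]
  rw [Finset.prod_congr rfl hrest]
  have hval : ((γ + Finsupp.single t 1 : ℕ →₀ ℕ) t) = γ t + 1 := by simp
  rw [hval]
  push_cast [Nat.factorial_succ, pow_succ]
  ring

end Stmt1Aux

namespace Stmt1Aux
variable {F : Type} [Field F] [CharZero F] (d : F → F) (g : F)

variable {k i : ℕ}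

/-- convert a tuple to a finsupp -/
noncomputable def toF (k : ℕ) (α : Fin k → Fin (k+1)) : ℕ →₀ ℕ :=
  Finsupp.onFinset (Finset.range k) (fun s => if h : s < k then (α ⟨s, h⟩ : ℕ) else 0)
    (by
      intro s hs
      rw [Finset.mem_range]
      by_contra h
      exact hs (dif_neg h))

lemma toF_apply (α : Fin k → Fin (k+1)) (j : Fin k) : toF k α (j : ℕ) = (α j : ℕ) := by
  rw [toF, Finsupp.onFinset_apply, dif_pos j.isLt]

lemma toF_supp (α : Fin k → Fin (k+1)) : (toF k α).support ⊆ Finset.range k :=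
  Finsupp.support_onFinset_subset

lemma toF_sum {M : Type*} [AddCommMonoid M] (α : Fin k → Fin (k+1)) (f : ℕ → ℕ → M)
    (h0 : ∀ s, f s 0 = 0) : (toF k α).sum f = ∑ j : Fin k, f (j : ℕ) (α j : ℕ) := by
  rw [Finsupp.sum_of_support_subset _ (toF_supp α) _ (fun s _ => h0 s), Finset.sum_range]
  exact Finset.sum_congr rfl fun j _ => by rw [toF_apply]

lemma toF_prod {M : Type*} [CommMonoid M] (α : Fin k → Fin (k+1)) (f : ℕ → ℕ → M)
    (h0 : ∀ s, f s 0 = 1) : (toF k α).prod f = ∏ j : Fin k, f (j : ℕ) (α j : ℕ) := by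
  rw [Finsupp.prod_of_support_subset _ (toF_supp α) _ (fun s _ => h0 s), Finset.prod_range]
  exact Finset.prod_congr rfl fun j _ => by rw [toF_apply]

lemma apply_le_wt (β : ℕ →₀ ℕ) (s : ℕ) : β s ≤ wt β := by
  by_cases h : β s = 0
  · omega
  · have hs : s ∈ β.support := Finsupp.mem_support_iff.2 h
    have h2 : (s+1) * β s ≤ wt β := by
      rw [wt, Finsupp.sum]
      exact Finset.single_le_sum (f := fun u => (u+1) * β u) (fun _ _ => Nat.zero_le _) hs
    nlinarith

lemma cnt_fin {β : ℕ →₀ ℕ} (h : β.support ⊆ Finset.range k) :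
    cnt β = ∑ j : Fin k, β (j : ℕ) := by
  rw [cnt, Finsupp.sum_of_support_subset _ h _ (fun _ _ => rfl), Finset.sum_range]

lemma wt_fin {β : ℕ →₀ ℕ} (h : β.support ⊆ Finset.range k) :
    wt β = ∑ j : Fin k, ((j : ℕ)+1) * β (j : ℕ) := by
  rw [wt, Finsupp.sum_of_support_subset _ h _ (fun s _ => by simp), Finset.sum_range]

lemma phi_eq_P : Phi d g k i = P d g k i := by
  classical
  rw [Phi, P]
  refine Finset.sum_nbij' (toF k) (fun β j => (⟨min (β (j:ℕ)) k, by omega⟩ : Fin (k+1))) ?_ ?_ ?_ ?_ ?_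
  · intro α hα
    rw [Finset.mem_filter] at hα
    rw [Stmt1Aux.mem_A]
    constructor
    · rw [cnt, toF_sum α _ (fun _ => rfl)]
      exact hα.2.1
    · rw [wt, toF_sum α _ (fun s => by simp)]
      exact hα.2.2
  · intro β hβ
    rw [mem_A] at hβ
    rw [Finset.mem_filter]
    refine ⟨Finset.mem_univ _, ?_, ?_⟩
    · have : ∀ j : Fin k, min (β (j:ℕ)) k = β (j:ℕ) := fun j =>
        min_eq_left ((apply_le_wt β _).trans (le_of_eq hβ.2))
      calc ∑ j : Fin k, ((⟨min (β (j:ℕ)) k, by omega⟩ : Fin (k+1)) : ℕ)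
          = ∑ j : Fin k, β (j:ℕ) := Finset.sum_congr rfl fun j _ => this j
        _ = i := by rw [← cnt_fin (supp_subset_of_wt hβ.2), hβ.1]
    · have : ∀ j : Fin k, min (β (j:ℕ)) k = β (j:ℕ) := fun j =>
        min_eq_left ((apply_le_wt β _).trans (le_of_eq hβ.2))
      calc ∑ j : Fin k, ((j:ℕ)+1) * ((⟨min (β (j:ℕ)) k, by omega⟩ : Fin (k+1)) : ℕ)
          = ∑ j : Fin k, ((j:ℕ)+1) * β (j:ℕ) := Finset.sum_congr rfl fun j _ =>
            congrArg (fun m => ((j:ℕ)+1) * m) (this j)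
        _ = k := by rw [← wt_fin (supp_subset_of_wt hβ.2), hβ.2]
  · intro α hα
    funext j
    ext
    show min (toF k α (j:ℕ)) k = (α j : ℕ)
    rw [toF_apply]
    exact min_eq_left (by omega)
  · intro β hβ
    rw [mem_A] at hβ
    have hsupp := supp_subset_of_wt hβ.2
    have hle : ∀ s, β s ≤ k := fun s => (apply_le_wt β s).trans (le_of_eq hβ.2)
    ext s
    rw [toF, Finsupp.onFinset_apply]
    by_cases h : s < k
    · rw [dif_pos h]
      simp [min_eq_left (hle s)]
    · rw [dif_neg h]
      by_contra hc
      have : s ∈ β.support := Finsupp.mem_support_iff.2 fun h0 => hc h0.symm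
      have := hsupp this
      rw [Finset.mem_range] at this
      omega
  · intro α hα
    congr 1
    · congr 1
      rw [den_superset (toF_supp α), Finset.prod_range, ← Finset.prod_mul_distrib]
      refine (Finset.prod_congr rfl fun j _ => ?_).symm
      rw [toF_apply]
    · rw [mono_superset d g (toF_supp α), Finset.prod_range]
      exact Finset.prod_congr rfl fun j _ => by rw [toF_apply]

end Stmt1Aux

namespace Stmt1Aux
variable {F : Type} [Field F] [CharZero F] (d : F → F) (g : F)
variable (hd_add : ∀ a b : F, d (a + b) = d a + d b)
variable (hd_mul : ∀ a b : F, d (a * b) = d a * b + a * d b)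

lemma mono_add (γ₁ γ₂ : ℕ →₀ ℕ) : mono d g (γ₁ + γ₂) = mono d g γ₁ * mono d g γ₂ :=
  Finsupp.prod_add_index' (fun s => pow_zero _) (fun s a b => pow_add _ a b)

lemma mono_single (t n : ℕ) : mono d g (Finsupp.single t n) = (d^[t] g) ^ n :=
  Finsupp.prod_single_index (pow_zero _)

lemma qcast_mul_smul (q' q : ℚ) (x : F) : ((q' : ℚ) : F) * (q • x) = (q' * q) • x := by
  rw [Rat.smul_def, Rat.smul_def, Rat.cast_mul]; ring

lemma den_ne_zero (γ : ℕ →₀ ℕ) : den γ ≠ 0 := ne_of_gt (den_pos γ)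

include hd_add hd_mul in
lemma d_mono (α : ℕ →₀ ℕ) :
    d (mono d g α) = ∑ s ∈ α.support,
      (α s : F) * mono d g (α - Finsupp.single s 1 + Finsupp.single (s+1) 1) := by
  classical
  rw [mono, Finsupp.prod, d_prod' d hd_mul]
  refine Finset.sum_congr rfl fun s hs => ?_
  have hs1 : 1 ≤ α s := Nat.one_le_iff_ne_zero.2 (Finsupp.mem_support_iff.1 hs)
  have hdpow : d ((d^[s] g) ^ (α s)) = (α s : F) * (d^[s] g) ^ (α s - 1) * d^[s+1] g := by
    rw [d_pow' d hd_mul, Function.iterate_succ_apply' d s g]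
  rw [hdpow]
  have hsubsupp : (α - Finsupp.single s 1 : ℕ →₀ ℕ).support ⊆ α.support := by
    intro u hu
    rw [Finsupp.mem_support_iff] at hu ⊢
    intro h0
    apply hu
    rw [Finsupp.tsub_apply, h0]
    simp
  have hmsub : mono d g (α - Finsupp.single s 1) =
      (d^[s] g) ^ (α s - 1) * ∏ u ∈ α.support.erase s, (d^[u] g) ^ (α u) := by
    rw [mono_superset d g hsubsupp, ← Finset.mul_prod_erase _ _ hs]
    have h1 : (α - Finsupp.single s 1 : ℕ →₀ ℕ) s = α s - 1 := by
      rw [Finsupp.tsub_apply, Finsupp.single_apply, if_pos rfl]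
    rw [h1]
    congr 1
    refine Finset.prod_congr rfl fun u hu => ?_
    have : (α - Finsupp.single s 1 : ℕ →₀ ℕ) u = α u := by
      rw [Finsupp.tsub_apply, Finsupp.single_apply, if_neg (Finset.ne_of_mem_erase hu).symm]
      simp
    rw [this]
  rw [mono_add, mono_single, pow_one, hmsub]
  ring

lemma A_empty_of_lt {k i : ℕ} (h : k < i) : A k i = ∅ := by
  rw [Finset.eq_empty_iff_forall_notMem]
  intro α hα
  rw [mem_A] at hα
  have : cnt α ≤ wt α := by
    rw [cnt, wt, Finsupp.sum, Finsupp.sum]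
    refine Finset.sum_le_sum fun s _ => ?_
    nlinarith
  omega

lemma A_empty_of_cnt_zero {k : ℕ} (h : 1 ≤ k) : A k 0 = ∅ := by
  rw [Finset.eq_empty_iff_forall_notMem]
  intro α hα
  rw [mem_A] at hα
  have h0 : α = 0 := by
    ext u
    by_cases hu : u ∈ α.support
    · have : α u ≤ cnt α := by
        rw [cnt, Finsupp.sum]
        exact Finset.single_le_sum (f := fun u => α u) (fun _ _ => Nat.zero_le _) hu
      simp only [Finsupp.coe_zero, Pi.zero_apply]
      omega
    · simpa using Finsupp.notMem_support_iff.1 hu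
  rw [h0] at hα
  simp [wt] at hα
  omega

lemma P_zero_of_lt {k i : ℕ} (h : k < i) : P d g k i = 0 := by
  rw [P, A_empty_of_lt h, Finset.sum_empty]

lemma P_zero_of_cnt_zero {k : ℕ} (h : 1 ≤ k) : P d g k 0 = 0 := by
  rw [P, A_empty_of_cnt_zero h, Finset.sum_empty]

lemma P_one_one : P d g 1 1 = g := by
  have hA : A 1 1 = {Finsupp.single 0 1} := by
    ext α
    rw [mem_A, Finset.mem_singleton]
    constructor
    · rintro ⟨h1, h2⟩
      have hsupp : α.support ⊆ {0} := by
        have := supp_subset_of_wt h2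
        simpa using this
      have := Finsupp.support_subset_singleton.1 hsupp
      rw [this]
      congr 1
      have : cnt α = α 0 := by
        rw [cnt, Finsupp.sum_of_support_subset _ hsupp _ (fun _ _ => rfl), Finset.sum_singleton]
      omega
    · rintro rfl
      constructor
      · rw [cnt, Finsupp.sum_single_index rfl]
      · rw [wt, Finsupp.sum_single_index (by simp)]
  rw [P, hA, Finset.sum_singleton, mono_single, pow_one, Function.iterate_zero_apply]
  have hden : den (Finsupp.single 0 1) = 1 := by
    rw [den, Finsupp.prod_single_index (by simp)]
    simp [Nat.factorial]
  rw [hden]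
  norm_num

end Stmt1Aux

namespace Stmt1Aux
variable {F : Type} [Field F] [CharZero F] (d : F → F) (g : F)
variable (hd_add : ∀ a b : F, d (a + b) = d a + d b)
variable (hd_mul : ∀ a b : F, d (a * b) = d a * b + a * d b)

lemma add_single_apply_self (γ : ℕ →₀ ℕ) (t : ℕ) :
    (γ + Finsupp.single t 1 : ℕ →₀ ℕ) t = γ t + 1 := by
  simp

lemma shuffle {γ : ℕ →₀ ℕ} {a b : ℕ} (h : 1 ≤ γ a) (hab : a ≠ b) :
    (γ - Finsupp.single a 1 + Finsupp.single b 1) - Finsupp.single b 1 + Finsupp.single a 1 = γ := by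
  ext u
  by_cases h1 : a = u
  · subst h1
    simp only [Finsupp.add_apply, Finsupp.tsub_apply, Finsupp.single_apply, if_true,
      if_neg (show ¬ b = a from fun hh => hab hh.symm)]
    omega
  · by_cases h2 : b = u
    · subst h2
      simp only [Finsupp.add_apply, Finsupp.tsub_apply, Finsupp.single_apply, if_true,
        if_neg h1]
      omega
    · simp only [Finsupp.add_apply, Finsupp.tsub_apply, Finsupp.single_apply]
      rw [if_neg h1, if_neg h2]
      omega

include hd_add hd_mul in
lemma P_rec (k i : ℕ) : P d g (k+1) (i+1) = d (P d g k (i+1)) + g * P d g k i := by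
  classical
  -- RHS first piece
  have hR1 : d (P d g k (i+1)) = ∑ p ∈ (A k (i+1)).sigma (fun α => α.support),
      ((p.1 p.2 : ℚ) * ((k.factorial : ℚ) / den p.1)) •
        mono d g (p.1 - Finsupp.single p.2 1 + Finsupp.single (p.2+1) 1) := by
    rw [P, d_sum' d hd_add, Finset.sum_sigma]
    refine Finset.sum_congr rfl fun α hα => ?_
    rw [d_qsmul' d hd_add hd_mul, d_mono d g hd_add hd_mul, Finset.smul_sum]
    refine Finset.sum_congr rfl fun s hs => ?_
    rw [Rat.smul_def, Rat.smul_def]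
    push_cast
    ring
  -- RHS second piece
  have hR2 : g * P d g k i = ∑ α ∈ A k i, ((k.factorial : ℚ) / den α) •
      mono d g (α + Finsupp.single 0 1) := by
    rw [P, Finset.mul_sum]
    refine Finset.sum_congr rfl fun α hα => ?_
    rw [mono_add, mono_single, pow_one, Function.iterate_zero_apply, Rat.smul_def, Rat.smul_def]
    ring
  -- LHS expansion
  have hL1 : P d g (k+1) (i+1) = ∑ p ∈ (A (k+1) (i+1)).sigma (fun β => β.support),
      (((((p.2:ℕ)+1) * p.1 p.2 : ℕ) : ℚ)/((k:ℚ)+1) * (((k+1).factorial : ℚ) / den p.1)) •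
        mono d g p.1 := by
    rw [P, Finset.sum_sigma]
    refine Finset.sum_congr rfl fun β hβ => ?_
    dsimp only
    rw [← Finset.sum_smul]
    congr 1
    have hw : ∑ s ∈ β.support, ((s+1) * β s) = k+1 := by
      have := (mem_A.1 hβ).2
      rwa [wt, Finsupp.sum] at this
    have hcast : ∑ s ∈ β.support, (((s+1) * β s : ℕ) : ℚ) = ((k:ℚ)+1) := by
      rw [← Nat.cast_sum, hw]
      push_cast
      ring
    rw [← Finset.sum_mul, ← Finset.sum_div, hcast]
    have hk1 : ((k:ℚ)+1) ≠ 0 := by positivity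
    field_simp
  rw [hL1, ← Finset.sum_filter_add_sum_filter_not ((A (k+1) (i+1)).sigma (fun β => β.support))
    (fun p => p.2 = 0), hR1, hR2]
  have hb : ∑ p ∈ ((A (k+1) (i+1)).sigma (fun β => β.support)).filter (fun p => p.2 = 0),
      (((((p.2:ℕ)+1) * p.1 p.2 : ℕ) : ℚ)/((k:ℚ)+1) * (((k+1).factorial : ℚ) / den p.1)) •
        mono d g p.1
      = ∑ α ∈ A k i, ((k.factorial : ℚ) / den α) • mono d g (α + Finsupp.single 0 1) := by
    refine Finset.sum_nbij' (fun p => p.1 - Finsupp.single 0 1)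
      (fun α => ⟨α + Finsupp.single 0 1, 0⟩) ?_ ?_ ?_ ?_ ?_
    · rintro ⟨β, s⟩ hp
      rw [Finset.mem_filter, Finset.mem_sigma] at hp
      obtain ⟨⟨hβ, hssupp⟩, h0⟩ := hp
      cases h0
      dsimp only
      have hβ0 : 1 ≤ β 0 := Nat.one_le_iff_ne_zero.2 (Finsupp.mem_support_iff.1 hssupp)
      have hc := sub_add_single_cancel hβ0
      rw [mem_A] at hβ ⊢
      obtain ⟨hβ1, hβ2⟩ := hβ
      constructor
      · have h3 := cnt_add_single (β - Finsupp.single 0 1) 0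
        rw [hc] at h3
        have h4 : cnt (β - Finsupp.single 0 1) + 1 = i + 1 := by rw [← h3, hβ1]
        omega
      · have h3 := wt_add_single (β - Finsupp.single 0 1) 0
        rw [hc] at h3
        have h4 : wt (β - Finsupp.single 0 1) + (0 + 1) = k + 1 := by rw [← h3, hβ2]
        omega
    · intro α hα
      rw [Finset.mem_filter, Finset.mem_sigma]
      rw [mem_A] at hα
      refine ⟨⟨?_, ?_⟩, rfl⟩
      · rw [mem_A]
        constructor
        · rw [cnt_add_single]; omega
        · rw [wt_add_single]; omega
      · rw [Finsupp.mem_support_iff, add_single_apply_self]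
        omega
    · rintro ⟨β, s⟩ hp
      rw [Finset.mem_filter, Finset.mem_sigma] at hp
      obtain ⟨⟨hβ, hssupp⟩, h0⟩ := hp
      cases h0
      have hβ0 : 1 ≤ β 0 := Nat.one_le_iff_ne_zero.2 (Finsupp.mem_support_iff.1 hssupp)
      exact Sigma.ext (sub_add_single_cancel hβ0) (heq_of_eq rfl)
    · intro α hα
      ext u
      simp only [Finsupp.add_apply, Finsupp.tsub_apply, Finsupp.single_apply]
      split_ifs <;> omega
    · rintro ⟨β, s⟩ hp
      rw [Finset.mem_filter, Finset.mem_sigma] at hp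
      obtain ⟨⟨hβ, hssupp⟩, h0⟩ := hp
      cases h0
      have hβ0 : 1 ≤ β 0 := Nat.one_le_iff_ne_zero.2 (Finsupp.mem_support_iff.1 hssupp)
      dsimp only
      set α := β - Finsupp.single 0 1 with hαdef
      have hc : α + Finsupp.single 0 1 = β := sub_add_single_cancel hβ0
      have hβα : β = α + Finsupp.single 0 1 := hc.symm
      have hden : den β = ((α 0 : ℚ) + 1) * ((0+1).factorial : ℚ) * den α := by
        rw [hβα]; exact den_shift α 0
      have hβ0val : β 0 = α 0 + 1 := by rw [hβα, add_single_apply_self]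
      rw [hden, hβ0val, hβα]
      rw [Rat.smul_def, Rat.smul_def]
      have hd0 : den α ≠ 0 := den_ne_zero α
      have hk1 : ((k:ℚ)+1) ≠ 0 := by positivity
      have hfact : (((k+1).factorial : ℚ)) = ((k:ℚ)+1) * (k.factorial : ℚ) := by
        rw [Nat.factorial_succ]; push_cast; ring
      rw [hfact]
      rw [mono_add, mono_single, pow_one, Function.iterate_zero_apply]
      have hd0F : ((den α : ℚ) : F) ≠ 0 := Rat.cast_ne_zero.2 hd0
      have hkF : ((k:F)+1) ≠ 0 := Nat.cast_add_one_ne_zero k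
      have hαF : ((α 0 : F) + 1) ≠ 0 := Nat.cast_add_one_ne_zero (α 0)
      push_cast [Nat.factorial_one]
      field_simp
  have ha : ∑ p ∈ ((A (k+1) (i+1)).sigma (fun β => β.support)).filter (fun p => ¬ p.2 = 0),
      (((((p.2:ℕ)+1) * p.1 p.2 : ℕ) : ℚ)/((k:ℚ)+1) * (((k+1).factorial : ℚ) / den p.1)) •
        mono d g p.1
      = ∑ p ∈ (A k (i+1)).sigma (fun α => α.support),
      ((p.1 p.2 : ℚ) * ((k.factorial : ℚ) / den p.1)) •
        mono d g (p.1 - Finsupp.single p.2 1 + Finsupp.single (p.2+1) 1) := by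
    refine Finset.sum_nbij'
      (fun p => ⟨p.1 - Finsupp.single p.2 1 + Finsupp.single (p.2 - 1) 1, p.2 - 1⟩)
      (fun p => ⟨p.1 - Finsupp.single p.2 1 + Finsupp.single (p.2 + 1) 1, p.2 + 1⟩)
      ?_ ?_ ?_ ?_ ?_
    · rintro ⟨β, s⟩ hp
      rw [Finset.mem_filter, Finset.mem_sigma] at hp
      obtain ⟨⟨hβ, hssupp⟩, hs0⟩ := hp
      rw [mem_A] at hβ
      obtain ⟨hβ1, hβ2⟩ := hβ
      obtain ⟨t, rfl⟩ : ∃ t, s = t + 1 := ⟨s - 1, by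
        have : s ≠ 0 := hs0
        omega⟩
      have hβs : 1 ≤ β (t+1) := Nat.one_le_iff_ne_zero.2 (Finsupp.mem_support_iff.1 hssupp)
      have hc : β - Finsupp.single (t+1) 1 + Finsupp.single (t+1) 1 = β :=
        sub_add_single_cancel hβs
      have hcnt : cnt β = cnt (β - Finsupp.single (t+1) 1) + 1 := by
        conv_lhs => rw [← hc]
        rw [cnt_add_single]
      have hwt : wt β = wt (β - Finsupp.single (t+1) 1) + (t+1+1) := by
        conv_lhs => rw [← hc]
        rw [wt_add_single]
      dsimp only
      rw [Finset.mem_sigma]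
      simp only [Nat.add_sub_cancel]
      constructor
      · rw [mem_A]
        constructor
        · rw [cnt_add_single, ← hcnt]
          exact hβ1
        · rw [wt_add_single]
          have h9 : wt (β - Finsupp.single (t+1) 1) + (t+1+1) = k+1 := by
            rw [← hwt]; exact hβ2
          omega
      · rw [Finsupp.mem_support_iff, add_single_apply_self]
        omega
    · rintro ⟨α, t⟩ hp
      rw [Finset.mem_sigma] at hp
      obtain ⟨hα, htsupp⟩ := hp
      rw [mem_A] at hα
      obtain ⟨hα1, hα2⟩ := hα
      have hαt : 1 ≤ α t := Nat.one_le_iff_ne_zero.2 (Finsupp.mem_support_iff.1 htsupp)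
      have hc : α - Finsupp.single t 1 + Finsupp.single t 1 = α := sub_add_single_cancel hαt
      have hcnt : cnt α = cnt (α - Finsupp.single t 1) + 1 := by
        conv_lhs => rw [← hc]
        rw [cnt_add_single]
      have hwt : wt α = wt (α - Finsupp.single t 1) + (t+1) := by
        conv_lhs => rw [← hc]
        rw [wt_add_single]
      dsimp only
      rw [Finset.mem_filter, Finset.mem_sigma]
      refine ⟨⟨?_, ?_⟩, fun h => Nat.succ_ne_zero t h⟩
      · rw [mem_A]
        constructor
        · rw [cnt_add_single, ← hcnt]
          exact hα1
        · rw [wt_add_single]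
          have h9 : wt (α - Finsupp.single t 1) + (t+1) = k := by
            rw [← hwt]; exact hα2
          omega
      · rw [Finsupp.mem_support_iff, add_single_apply_self]
        omega
    · rintro ⟨β, s⟩ hp
      rw [Finset.mem_filter, Finset.mem_sigma] at hp
      obtain ⟨⟨hβ, hssupp⟩, hs0⟩ := hp
      obtain ⟨t, rfl⟩ : ∃ t, s = t + 1 := ⟨s - 1, by
        have : s ≠ 0 := hs0
        omega⟩
      have hβs : 1 ≤ β (t+1) := Nat.one_le_iff_ne_zero.2 (Finsupp.mem_support_iff.1 hssupp)
      dsimp only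
      simp only [Nat.add_sub_cancel]
      exact Sigma.ext (shuffle hβs (by omega)) (heq_of_eq rfl)
    · rintro ⟨α, t⟩ hp
      rw [Finset.mem_sigma] at hp
      obtain ⟨hα, htsupp⟩ := hp
      have hαt : 1 ≤ α t := Nat.one_le_iff_ne_zero.2 (Finsupp.mem_support_iff.1 htsupp)
      dsimp only
      simp only [Nat.add_sub_cancel]
      exact Sigma.ext (shuffle hαt (by omega)) (heq_of_eq rfl)
    · rintro ⟨β, s⟩ hp
      rw [Finset.mem_filter, Finset.mem_sigma] at hp
      obtain ⟨⟨hβ, hssupp⟩, hs0⟩ := hp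
      obtain ⟨t, rfl⟩ : ∃ t, s = t + 1 := ⟨s - 1, by
        have : s ≠ 0 := hs0
        omega⟩
      have hβs : 1 ≤ β (t+1) := Nat.one_le_iff_ne_zero.2 (Finsupp.mem_support_iff.1 hssupp)
      dsimp only
      simp only [Nat.add_sub_cancel]
      set δ := β - Finsupp.single (t+1) 1 with hδdef
      have hc : δ + Finsupp.single (t+1) 1 = β := sub_add_single_cancel hβs
      have hmonoarg : (δ + Finsupp.single t 1) - Finsupp.single t 1 + Finsupp.single (t+1) 1
          = β := by
        rw [hδdef]
        exact shuffle hβs (by omega)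
      rw [hmonoarg]
      have hdenβ : den β = ((δ (t+1) : ℚ) + 1) * ((t+1+1).factorial : ℚ) * den δ := by
        conv_lhs => rw [← hc]
        exact den_shift δ (t+1)
      have hdenα : den (δ + Finsupp.single t 1)
          = ((δ t : ℚ) + 1) * ((t+1).factorial : ℚ) * den δ := den_shift δ t
      have hβval : β (t+1) = δ (t+1) + 1 := by
        conv_lhs => rw [← hc]
        exact add_single_apply_self δ (t+1)
      have hαval : (δ + Finsupp.single t 1 : ℕ →₀ ℕ) t = δ t + 1 := add_single_apply_self δ t
      rw [hdenβ, hdenα, hβval, hαval]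
      refine congrArg (fun q : ℚ => q • mono d g β) ?_
      have hd0 : den δ ≠ 0 := den_ne_zero δ
      have hkQ : ((k:ℚ)+1) ≠ 0 := by positivity
      have htQ : ((t:ℚ)+1+1) ≠ 0 := by positivity
      have hδtQ : ((δ t : ℚ) + 1) ≠ 0 := by positivity
      have hδt1Q : ((δ (t+1) : ℚ) + 1) ≠ 0 := by positivity
      have hftQ : (((t+1).factorial : ℚ)) ≠ 0 := Nat.cast_ne_zero.2 (t+1).factorial_ne_zero
      push_cast [Nat.factorial_succ]
      field_simp
  rw [hb, ha]
  ring

end Stmt1Aux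

/-- in a differential field `(F,d)` of characteristic zero, for `g ≠ 0` and
`δ = g⁻¹d`, one has `dᵏ = Σ_{i=1}^{k} Φᵏᵢ(g) δⁱ` as operators on `F`, for every `k ≥ 1`. -/
theorem stmt_1 (F : Type) [Field F] [CharZero F]
    (d : F → F)
    (hd_add : ∀ a b : F, d (a + b) = d a + d b)
    (hd_mul : ∀ a b : F, d (a * b) = d a * b + a * d b)
    (g : F) (hg : g ≠ 0)
    (δ : F → F) (hδ : ∀ a : F, δ a = g⁻¹ * d a)
    (k : ℕ) (hk : 1 ≤ k) :
    ∀ a : F, d^[k] a = ∑ i ∈ Finset.Icc 1 k, Phi d g k i * δ^[i] a := by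
  suffices h : ∀ a : F, d^[k] a = ∑ i ∈ Finset.Icc 1 k, Stmt1Aux.P d g k i * δ^[i] a by
    intro a
    rw [h a]
    exact Finset.sum_congr rfl fun i _ => by rw [Stmt1Aux.phi_eq_P]
  induction k, hk using Nat.le_induction with
  | base =>
      intro a
      rw [Finset.Icc_self, Finset.sum_singleton, Function.iterate_one, Function.iterate_one,
        Stmt1Aux.P_one_one, hδ, mul_inv_cancel_left₀ hg]
  | succ k hk1 IH =>
      intro a
      have hdelta : ∀ i : ℕ, d (δ^[i] a) = g * δ^[i+1] a := by
        intro i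
        rw [Function.iterate_succ_apply' δ, hδ, mul_inv_cancel_left₀ hg]
      have hterm : ∀ i ∈ Finset.Icc 1 k, d (Stmt1Aux.P d g k i * δ^[i] a)
          = d (Stmt1Aux.P d g k i) * δ^[i] a + Stmt1Aux.P d g k i * (g * δ^[i+1] a) := by
        intro i _
        rw [hd_mul, hdelta]
      have e1 : ∑ i ∈ Finset.Icc 1 k, d (Stmt1Aux.P d g k i) * δ^[i] a
          = ∑ j ∈ Finset.range k, d (Stmt1Aux.P d g k (j+1)) * δ^[j+1] a := by
        rw [← Finset.Ico_add_one_right_eq_Icc, Finset.sum_Ico_eq_sum_range]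
        simp only [Nat.succ_sub_one, Nat.add_sub_cancel, Nat.add_comm 1]
      have e2 : ∑ i ∈ Finset.Icc 1 k, Stmt1Aux.P d g k i * (g * δ^[i+1] a)
          = ∑ j ∈ Finset.range k, Stmt1Aux.P d g k (j+1) * (g * δ^[j+1+1] a) := by
        rw [← Finset.Ico_add_one_right_eq_Icc, Finset.sum_Ico_eq_sum_range]
        simp only [Nat.succ_sub_one, Nat.add_sub_cancel, Nat.add_comm 1]
      have hRHS : ∑ i ∈ Finset.Icc 1 (k+1), Stmt1Aux.P d g (k+1) i * δ^[i] a
          = (∑ j ∈ Finset.range k, d (Stmt1Aux.P d g k (j+1)) * δ^[j+1] a)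
            + ∑ j ∈ Finset.range k, Stmt1Aux.P d g k (j+1) * (g * δ^[j+1+1] a) := by
        rw [← Finset.Ico_add_one_right_eq_Icc, Finset.sum_Ico_eq_sum_range]
        simp only [Nat.succ_sub_one, Nat.add_sub_cancel]
        have hstep : ∀ j ∈ Finset.range (k+1), Stmt1Aux.P d g (k+1) (1+j) * δ^[1+j] a
            = d (Stmt1Aux.P d g k (j+1)) * δ^[j+1] a + g * Stmt1Aux.P d g k j * δ^[j+1] a := by
          intro j _
          rw [Nat.add_comm 1 j, Stmt1Aux.P_rec d g hd_add hd_mul k j, add_mul]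
        rw [Finset.sum_congr rfl hstep, Finset.sum_add_distrib, Finset.sum_range_succ,
          Stmt1Aux.P_zero_of_lt d g (Nat.lt_succ_self k), d_zero' d hd_add, zero_mul, add_zero,
          Finset.sum_range_succ', Stmt1Aux.P_zero_of_cnt_zero d g hk1, mul_zero, zero_mul,
          add_zero]
        congr 1
        exact Finset.sum_congr rfl fun j _ => by ring
      rw [Function.iterate_succ_apply' d, IH a, d_sum' d hd_add, Finset.sum_congr rfl hterm,
        Finset.sum_add_distrib, e1, e2, hRHS]
end

section
/- Each coordinate xᵢ satisfies the linear differential equation Σ_{i=1}^{n+1} (−1)^{n+1−i} (W^δ_i / W^δ) δⁱ y = 0, whose coefficients W^δ_i/W^δ are (F*, GL(n,C)⋉Cⁿ)-invariant differential rational functions. In particular each xᵢ is δ-differentially algebraic over (C⟨x,d⟩^{(F*,H)}, δ) for any subgroup H of GL(n,C)⋉Cⁿ. -/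
set_option maxHeartbeats 2000000
set_option synthInstance.maxHeartbeats 1000000



/-- The field of differential rational functions in `x₁,…,xₙ` over `C`:
the fraction field of the polynomial ring in the indeterminates `dᵏxᵢ`. -/
abbrev DRF (C : Type) [Field C] (n : ℕ) := FractionRing (MvPolynomial (Fin n × ℕ) C)

/-- `dᵏxᵢ` as an element of `DRF C n`. -/
noncomputable def XX (C : Type) [Field C] (n : ℕ) (i : Fin n) (k : ℕ) : DRF C n :=
  algebraMap (MvPolynomial (Fin n × ℕ) C) (DRF C n) (MvPolynomial.X (i, k))

/-- The embedding of the constants `C` into `DRF C n`. -/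
noncomputable def CC (C : Type) [Field C] (n : ℕ) : C →+* DRF C n :=
  (algebraMap (MvPolynomial (Fin n × ℕ) C) (DRF C n)).comp MvPolynomial.C

/-- `τ : C⟨x,d⟩ → F⟨x,d⟩` is the substitution `x ↦ hx+h₀`, `d ↦ g⁻¹·dL`:
it fixes constants (via `emb : C → F`) and sends `dᵏxᵢ` to `δᵏ(Σⱼhᵢⱼxⱼ + h₀ᵢ)`
where `δ = g⁻¹·dL`. -/
def IsSubst (C F : Type) [Field C] [Field F] (n : ℕ) (emb : C →+* F)
    (dL : DRF F n → DRF F n) (g : F)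
    (h : Matrix (Fin n) (Fin n) C) (h₀ : Fin n → C)
    (τ : DRF C n →+* DRF F n) : Prop :=
  (∀ c : C, τ (CC C n c) = CC F n (emb c)) ∧
  (∀ (i : Fin n) (k : ℕ),
    τ (XX C n i k) = (fun a => (CC F n g)⁻¹ * dL a)^[k]
      ((∑ j, CC F n (emb (h i j)) * XX F n j 0) + CC F n (emb (h₀ i))))


/-- `W^δ_i{x}` for `1 ≤ i ≤ n+1`: the determinant obtained from `[δx,…,δ^{n+1}x]` by
deleting the column `δⁱx`; `Wd δ n (n+1) = W^δ = det[δx,…,δⁿx]`. -/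
noncomputable def Wd {C : Type} [Field C] {n : ℕ} (δ : DRF C n → DRF C n) (i : ℕ) : DRF C n :=
  Matrix.det (Matrix.of fun a b : Fin n =>
    δ^[if (a : ℕ) + 1 < i then (a : ℕ) + 1 else (a : ℕ) + 2] (XX C n b 0))

lemma derivLike_ext {C B : Type} [Field C] [Field B] {n : ℕ}
    (τ : DRF C n →+* B) (Φ Ψ : DRF C n → B)
    (hΦa : ∀ a b, Φ (a + b) = Φ a + Φ b)
    (hΦm : ∀ a b, Φ (a * b) = Φ a * τ b + τ a * Φ b)
    (hΨa : ∀ a b, Ψ (a + b) = Ψ a + Ψ b)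
    (hΨm : ∀ a b, Ψ (a * b) = Ψ a * τ b + τ a * Ψ b)
    (hX : ∀ q : Fin n × ℕ,
      Φ (algebraMap (MvPolynomial (Fin n × ℕ) C) (DRF C n) (MvPolynomial.X q)) =
      Ψ (algebraMap (MvPolynomial (Fin n × ℕ) C) (DRF C n) (MvPolynomial.X q)))
    (hC : ∀ c : C,
      Φ (algebraMap (MvPolynomial (Fin n × ℕ) C) (DRF C n) (MvPolynomial.C c)) =
      Ψ (algebraMap (MvPolynomial (Fin n × ℕ) C) (DRF C n) (MvPolynomial.C c))) :
    ∀ a, Φ a = Ψ a := by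
  have key : ∀ q : MvPolynomial (Fin n × ℕ) C,
      Φ (algebraMap _ (DRF C n) q) = Ψ (algebraMap _ (DRF C n) q) := by
    intro q
    induction q using MvPolynomial.induction_on with
    | C c => exact hC c
    | add p q hp hq => rw [map_add, hΦa, hΨa, hp, hq]
    | mul_X p i hp => rw [map_mul, hΦm, hΨm, hp, hX]
  intro a
  obtain ⟨x, y, hy, rfl⟩ := IsFractionRing.div_surjective (A := MvPolynomial (Fin n × ℕ) C) a
  set x' := algebraMap (MvPolynomial (Fin n × ℕ) C) (DRF C n) x with hx'
  set y' := algebraMap (MvPolynomial (Fin n × ℕ) C) (DRF C n) y with hy'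
  have hy0 : y' ≠ 0 := IsFractionRing.to_map_ne_zero_of_mem_nonZeroDivisors hy
  have hty : τ y' ≠ 0 := fun h => hy0 (τ.injective (by rw [h, map_zero]))
  have hxy : x'/y' * y' = x' := div_mul_cancel₀ _ hy0
  have e1 : Φ (x'/y') * τ y' + τ (x'/y') * Φ y' = Ψ (x'/y') * τ y' + τ (x'/y') * Ψ y' := by
    rw [← hΦm, ← hΨm, hxy, key]
  have e2 : Φ y' = Ψ y' := key y
  have e3 : Φ (x'/y') * τ y' = Ψ (x'/y') * τ y' := by
    have := e1; rw [e2] at this; exact add_right_cancel this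
  exact mul_right_cancel₀ hty e3

/-- Coefficients expressing `δ^[k] xᵦ` in terms of `dᵐxᵦ`. -/
noncomputable def wcoef {C : Type} [Field C] {n : ℕ}
    (δ : DRF C n → DRF C n) (pinv : DRF C n) : ℕ → ℕ → DRF C n
  | 0, 0 => 1
  | 0, _ + 1 => 0
  | k + 1, 0 => δ (wcoef δ pinv k 0)
  | k + 1, m + 1 => δ (wcoef δ pinv k (m + 1)) + pinv * wcoef δ pinv k m

section Wcoef
variable {C : Type} [Field C] {n : ℕ} (δ : DRF C n → DRF C n) (pinv : DRF C n)
variable (hδ0 : δ 0 = 0) (hδ1 : δ 1 = 0)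

include hδ0 in
lemma wcoef_eq_zero : ∀ k m, k < m → wcoef δ pinv k m = 0 := by
  intro k
  induction k with
  | zero => intro m hm; obtain ⟨m', rfl⟩ := Nat.exists_eq_add_of_lt hm; rfl
  | succ k ih =>
    intro m hm
    obtain ⟨m', rfl⟩ : ∃ m', m = m' + 1 := ⟨m - 1, by omega⟩
    show δ (wcoef δ pinv k (m' + 1)) + pinv * wcoef δ pinv k m' = 0
    rw [ih _ (by omega), ih _ (by omega), hδ0, mul_zero, add_zero]

include hδ0 in
lemma wcoef_diag : ∀ k, wcoef δ pinv k k = pinv ^ k := by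
  intro k
  induction k with
  | zero => rw [pow_zero]; rfl
  | succ k ih =>
    show δ (wcoef δ pinv k (k + 1)) + pinv * wcoef δ pinv k k = pinv ^ (k + 1)
    rw [wcoef_eq_zero δ pinv hδ0 k (k + 1) (by omega), hδ0, ih, zero_add, pow_succ, mul_comm]

include hδ0 hδ1 in
lemma wcoef_zero_col : ∀ k, 1 ≤ k → wcoef δ pinv k 0 = 0 := by
  intro k hk
  induction k with
  | zero => omega
  | succ k ih =>
    show δ (wcoef δ pinv k 0) = 0
    rcases Nat.eq_zero_or_pos k with rfl | hk'
    · show δ (1 : DRF C n) = 0; exact hδ1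
    · rw [ih (by omega), hδ0]

end Wcoef

lemma deriv_zero' {K : Type} [Field K] (d : K → K)
    (hadd : ∀ a b, d (a + b) = d a + d b) : d 0 = 0 := by
  have h := hadd 0 0
  rw [add_zero] at h
  exact (add_eq_left.mp h.symm)

lemma deriv_one' {K : Type} [Field K] (d : K → K)
    (hmul : ∀ a b, d (a * b) = d a * b + a * d b) : d 1 = 0 := by
  have h := hmul 1 1
  simp only [mul_one, one_mul] at h
  exact add_eq_left.mp h.symm

section Expand
variable {C : Type} [Field C] {n : ℕ} (δ : DRF C n → DRF C n) (pinv : DRF C n)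

lemma delta_iter_expand
    (hadd : ∀ a b, δ (a + b) = δ a + δ b)
    (hmul : ∀ a b, δ (a * b) = δ a * b + a * δ b)
    (hX : ∀ (i : Fin n) (k : ℕ), δ (XX C n i k) = pinv * XX C n i (k + 1)) :
    ∀ (k : ℕ) (b : Fin n),
      δ^[k] (XX C n b 0) = ∑ m ∈ Finset.range (k + 1), wcoef δ pinv k m * XX C n b m := by
  have hδ0 : δ 0 = 0 := deriv_zero' δ hadd
  have δsum : ∀ (s : Finset ℕ) (f : ℕ → DRF C n),
      δ (∑ i ∈ s, f i) = ∑ i ∈ s, δ (f i) := by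
    intro s f
    exact map_sum (AddMonoidHom.mk' δ hadd) f s
  intro k
  induction k with
  | zero => intro b; simp [wcoef]
  | succ k ih =>
    intro b
    rw [Function.iterate_succ_apply', ih b, δsum]
    have hterm : ∀ m, δ (wcoef δ pinv k m * XX C n b m)
        = δ (wcoef δ pinv k m) * XX C n b m + pinv * wcoef δ pinv k m * XX C n b (m + 1) := by
      intro m; rw [hmul, hX]; ring
    rw [Finset.sum_congr rfl (fun m _ => hterm m), Finset.sum_add_distrib]
    have h1 : ∑ m ∈ Finset.range (k + 1), δ (wcoef δ pinv k m) * XX C n b m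
        = (∑ m ∈ Finset.range (k + 1), δ (wcoef δ pinv k (m + 1)) * XX C n b (m + 1))
          + δ (wcoef δ pinv k 0) * XX C n b 0 := by
      rw [Finset.sum_range_succ' (fun m => δ (wcoef δ pinv k m) * XX C n b m) k]
      rw [Finset.sum_range_succ (fun m => δ (wcoef δ pinv k (m + 1)) * XX C n b (m + 1)) k]
      rw [wcoef_eq_zero δ pinv hδ0 k (k + 1) (by omega), hδ0, zero_mul, add_zero]
    rw [h1]
    rw [Finset.sum_range_succ' (fun m => wcoef δ pinv (k + 1) m * XX C n b m) (k + 1)]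
    simp only [wcoef]
    rw [Finset.sum_congr rfl
      (fun m _ => add_mul (δ (wcoef δ pinv k (m + 1))) (pinv * wcoef δ pinv k m) (XX C n b (m + 1))),
      Finset.sum_add_distrib]
    abel

lemma wronskian_ne_zero (hpinv : pinv ≠ 0)
    (hadd : ∀ a b, δ (a + b) = δ a + δ b)
    (hmul : ∀ a b, δ (a * b) = δ a * b + a * δ b)
    (hX : ∀ (i : Fin n) (k : ℕ), δ (XX C n i k) = pinv * XX C n i (k + 1)) :
    (Matrix.of fun a b : Fin n => δ^[(a : ℕ) + 1] (XX C n b 0)).det ≠ 0 := by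
  have hδ0 : δ 0 = 0 := deriv_zero' δ hadd
  have hδ1 : δ 1 = 0 := deriv_one' δ hmul
  set L : Matrix (Fin n) (Fin n) (DRF C n) :=
    Matrix.of (fun a m : Fin n => wcoef δ pinv ((a : ℕ) + 1) ((m : ℕ) + 1)) with hL
  set N : Matrix (Fin n) (Fin n) (MvPolynomial (Fin n × ℕ) C) :=
    Matrix.of (fun m b : Fin n => MvPolynomial.X (b, (m : ℕ) + 1)) with hN
  set M : Matrix (Fin n) (Fin n) (DRF C n) :=
    (algebraMap (MvPolynomial (Fin n × ℕ) C) (DRF C n)).mapMatrix N with hM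
  have hfac : (Matrix.of fun a b : Fin n => δ^[(a : ℕ) + 1] (XX C n b 0)) = L * M := by
    ext a b
    rw [Matrix.mul_apply]
    rw [Matrix.of_apply, delta_iter_expand δ pinv hadd hmul hX ((a : ℕ) + 1) b]
    rw [Finset.sum_range_succ' (fun m => wcoef δ pinv ((a : ℕ) + 1) m * XX C n b m) ((a : ℕ) + 1)]
    rw [wcoef_zero_col δ pinv hδ0 hδ1 ((a : ℕ) + 1) (by omega), zero_mul, add_zero]
    have hsub : ∑ m ∈ Finset.range ((a : ℕ) + 1),
        wcoef δ pinv ((a : ℕ) + 1) (m + 1) * XX C n b (m + 1)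
        = ∑ m ∈ Finset.range n, wcoef δ pinv ((a : ℕ) + 1) (m + 1) * XX C n b (m + 1) := by
      apply Finset.sum_subset
      · exact Finset.range_subset_range.mpr (by omega)
      · intro m _ hm
        rw [Finset.mem_range, not_lt] at hm
        rw [wcoef_eq_zero δ pinv hδ0 _ _ (by omega), zero_mul]
    rw [hsub, ← Fin.sum_univ_eq_sum_range
      (fun m => wcoef δ pinv ((a : ℕ) + 1) (m + 1) * XX C n b (m + 1)) n]
    apply Finset.sum_congr rfl
    intro m _
    simp only [hL, hM, hN, Matrix.of_apply, RingHom.mapMatrix_apply, Matrix.map_apply, XX]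
  rw [hfac, Matrix.det_mul]
  apply mul_ne_zero
  · have htri : L.BlockTriangular OrderDual.toDual := by
      intro i j hij
      rw [OrderDual.toDual_lt_toDual] at hij
      exact wcoef_eq_zero δ pinv hδ0 _ _ (by omega)
    rw [Matrix.det_of_lowerTriangular L htri]
    apply Finset.prod_ne_zero_iff.mpr
    intro a _
    rw [hL, Matrix.of_apply, wcoef_diag δ pinv hδ0]
    exact pow_ne_zero _ hpinv
  · rw [hM, ← RingHom.map_det]
    rw [Ne, IsFractionRing.to_map_eq_zero_iff]
    intro hdet
    have φdet := congrArg (MvPolynomial.aeval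
      (fun q : Fin n × ℕ => if (q.1 : ℕ) + 1 = q.2 then (1 : C) else 0)) hdet
    rw [map_zero, ← AlgHom.coe_toRingHom, RingHom.map_det] at φdet
    have hone : ((MvPolynomial.aeval
        (fun q : Fin n × ℕ => if (q.1 : ℕ) + 1 = q.2 then (1 : C) else 0) :
        MvPolynomial (Fin n × ℕ) C →ₐ[C] C) : MvPolynomial (Fin n × ℕ) C →+* C).mapMatrix N
        = (1 : Matrix (Fin n) (Fin n) C) := by
      ext m b
      simp only [RingHom.mapMatrix_apply, Matrix.map_apply, hN, Matrix.of_apply,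
        AlgHom.coe_toRingHom, MvPolynomial.aeval_X, Matrix.one_apply]
      by_cases h : m = b
      · subst h; simp
      · have : ¬ ((b : ℕ) + 1 = (m : ℕ) + 1) := by
          intro hc; exact h (Fin.ext (by omega)).symm
        simp [this, h]
        exact fun hc => h (Fin.ext hc).symm
    rw [hone, Matrix.det_one] at φdet
    exact (one_ne_zero : (1 : C) ≠ 0) φdet

end Expand

section DetId
variable {C : Type} [Field C] {n : ℕ}

lemma val_succAbove (r : Fin (n + 1)) (a : Fin n) :
    ((r.succAbove a) : ℕ) = if (a : ℕ) < (r : ℕ) then (a : ℕ) else (a : ℕ) + 1 := by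
  have hcond : (Fin.castSucc a < r) ↔ ((a : ℕ) < (r : ℕ)) := by
    rw [Fin.lt_def]; rfl
  by_cases h : (a : ℕ) < (r : ℕ)
  · rw [if_pos h, Fin.succAbove, if_pos (hcond.mpr h)]; rfl
  · rw [if_neg h, Fin.succAbove, if_neg (fun hc => h (hcond.mp hc))]; rfl

lemma det_identity (δ : DRF C n → DRF C n) (j : Fin n) :
    ∑ r : Fin (n + 1), (-1 : DRF C n) ^ ((r : ℕ) + n) * δ^[(r : ℕ) + 1] (XX C n j 0)
      * Wd δ ((r : ℕ) + 1) = 0 := by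
  classical
  set A : Matrix (Fin (n + 1)) (Fin (n + 1)) (DRF C n) :=
    Matrix.of (fun r c => δ^[(r : ℕ) + 1]
      (XX C n (if h : (c : ℕ) < n then ⟨(c : ℕ), h⟩ else j) 0)) with hA
  have hdet0 : A.det = 0 := by
    apply Matrix.det_zero_of_column_eq (i := Fin.castSucc j) (j := Fin.last n)
      (Fin.castSucc_lt_last j).ne
    intro k
    simp only [hA, Matrix.of_apply]
    have h1 : ((Fin.castSucc j : Fin (n + 1)) : ℕ) < n := by simpa using j.isLt
    rw [dif_pos h1, dif_neg (by simp)]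
    rfl
  have hsubm : ∀ r : Fin (n + 1),
      (A.submatrix r.succAbove (Fin.last n).succAbove).det = Wd δ ((r : ℕ) + 1) := by
    intro r
    unfold Wd
    congr 1
    ext a b
    rw [Matrix.submatrix_apply, Fin.succAbove_last]
    simp only [hA, Matrix.of_apply]
    have hb : ((Fin.castSucc b : Fin (n + 1)) : ℕ) < n := by simpa using b.isLt
    rw [dif_pos hb]
    have : (⟨((Fin.castSucc b : Fin (n + 1)) : ℕ), hb⟩ : Fin n) = b := rfl
    rw [this]
    congr 1
    rw [val_succAbove]
    split_ifs with h1 h2 h3 <;> omega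
  have hstep : ∑ r : Fin (n + 1), (-1 : DRF C n) ^ ((r : ℕ) + n)
        * δ^[(r : ℕ) + 1] (XX C n j 0) * Wd δ ((r : ℕ) + 1)
      = ∑ r : Fin (n + 1), (-1 : DRF C n) ^ ((r : ℕ) + (Fin.last n : ℕ)) * A r (Fin.last n)
        * (A.submatrix r.succAbove (Fin.last n).succAbove).det := by
    apply Finset.sum_congr rfl
    intro r _
    rw [hsubm r]
    have h2 : A r (Fin.last n) = δ^[(r : ℕ) + 1] (XX C n j 0) := by
      simp only [hA, Matrix.of_apply]
      rw [dif_neg (by simp)]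
    rw [h2, Fin.val_last]
  rw [hstep, ← Matrix.det_succ_column A (Fin.last n)]
  exact hdet0

end DetId

/-- each coordinate `xⱼ` satisfies
`Σ_{i=1}^{n+1} (−1)^{n+1−i} (W^δ_i/W^δ) δⁱxⱼ = 0`, the coefficients `W^δ_i/W^δ` are
`(F*, GL(n,C)⋉Cⁿ)`-invariant, and hence each `xⱼ` is `δ`-differentially algebraic over
`(C⟨x,d⟩^{(F*,H)}, δ)` for any subgroup `H ≤ GL(n,C)⋉Cⁿ`. -/
theorem stmt_12 (C F : Type) [Field C] [Field F] [CharZero F]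
    (dF : F → F)
    (hdF_add : ∀ a b : F, dF (a + b) = dF a + dF b)
    (hdF_mul : ∀ a b : F, dF (a * b) = dF a * b + a * dF b)
    (emb : C →+* F)
    (hconst : Set.range emb = {a : F | dF a = 0})
    (hCF : ∃ a : F, dF a ≠ 0)
    (n : ℕ) (hn : 1 < n)
    (dK : DRF C n → DRF C n)
    (hdK_add : ∀ a b, dK (a + b) = dK a + dK b)
    (hdK_mul : ∀ a b, dK (a * b) = dK a * b + a * dK b)
    (hdK_X : ∀ i k, dK (XX C n i k) = XX C n i (k + 1))
    (hdK_C : ∀ c : C, dK (CC C n c) = 0)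
    (dL : DRF F n → DRF F n)
    (hdL_add : ∀ a b, dL (a + b) = dL a + dL b)
    (hdL_mul : ∀ a b, dL (a * b) = dL a * b + a * dL b)
    (hdL_X : ∀ i k, dL (XX F n i k) = XX F n i (k + 1))
    (hdL_C : ∀ a : F, dL (CC F n a) = CC F n (dF a))
    (ι : DRF C n →+* DRF F n)
    (hι_C : ∀ c : C, ι (CC C n c) = CC F n (emb c))
    (hι_X : ∀ i k, ι (XX C n i k) = XX F n i k)
    (H : Set (Matrix (Fin n) (Fin n) C × (Fin n → C)))
    (hH_GL : ∀ q ∈ H, IsUnit q.1.det)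
    (hH_one : ((1 : Matrix (Fin n) (Fin n) C), (0 : Fin n → C)) ∈ H)
    (hH_mul : ∀ q ∈ H, ∀ r ∈ H, (q.1 * r.1, q.1.mulVec r.2 + q.2) ∈ H)
    (hH_inv : ∀ q ∈ H, ∃ r ∈ H, q.1 * r.1 = 1 ∧ q.1.mulVec r.2 + q.2 = 0)
    (p : DRF C n) (hp0 : p ≠ 0)
    (hp_inv : ∀ (g : F), g ≠ 0 → ∀ (h : Matrix (Fin n) (Fin n) C), IsUnit h.det →
      ∀ (h₀ : Fin n → C), ∀ τ : DRF C n →+* DRF F n,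
      IsSubst C F n emb dL g h h₀ τ → τ p = (CC F n g)⁻¹ * ι p)
    (δ : DRF C n → DRF C n) (hδ : ∀ a, δ a = p⁻¹ * dK a) :
    -- (i) each `xⱼ` solves the linear `δ`-differential equation with invariant coefficients
    (∀ j : Fin n,
      ∑ i ∈ Finset.Icc 1 (n + 1),
        (-1 : DRF C n) ^ (n + 1 - i) * (Wd δ i / Wd δ (n + 1)) * δ^[i] (XX C n j 0) = 0) ∧
    -- (ii) the coefficients `W^δ_i/W^δ` are `(F*, GL(n,C)⋉Cⁿ)`-invariant
    (∀ i ∈ Finset.Icc 1 (n + 1),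
      ∀ (g : F), g ≠ 0 → ∀ (h : Matrix (Fin n) (Fin n) C), IsUnit h.det →
      ∀ (h₀ : Fin n → C), ∀ τ : DRF C n →+* DRF F n,
        IsSubst C F n emb dL g h h₀ τ →
        τ (Wd δ i / Wd δ (n + 1)) = ι (Wd δ i / Wd δ (n + 1))) ∧
    -- (iii) each `xⱼ` is `δ`-differentially algebraic over `C⟨x,d⟩^{(F*,H)}`
    (∀ j : Fin n,
      ∃ q : MvPolynomial ℕ (DRF C n), q ≠ 0 ∧
        (∀ mono, MvPolynomial.coeff mono q ∈
          {f : DRF C n | ∀ (g : F), g ≠ 0 → ∀ r ∈ H, ∀ τ : DRF C n →+* DRF F n,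
            IsSubst C F n emb dL g r.1 r.2 τ → τ f = ι f}) ∧
        MvPolynomial.eval (fun k => δ^[k] (XX C n j 0)) q = 0) := by
  classical
  -- basic facts about δ
  have hδa : ∀ a b, δ (a + b) = δ a + δ b := by
    intro a b; rw [hδ, hδ, hδ, hdK_add, mul_add]
  have hδm : ∀ a b, δ (a * b) = δ a * b + a * δ b := by
    intro a b; rw [hδ, hδ, hδ, hdK_mul]; ring
  have hδX : ∀ (i : Fin n) (k : ℕ), δ (XX C n i k) = p⁻¹ * XX C n i (k + 1) := by
    intro i k; rw [hδ, hdK_X]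
  have hW0 : Wd δ (n + 1) ≠ 0 := by
    have hmat : Wd δ (n + 1)
        = (Matrix.of fun a b : Fin n => δ^[(a : ℕ) + 1] (XX C n b 0)).det := by
      unfold Wd
      congr 1
      ext a b
      have ha := a.isLt
      simp only [Matrix.of_apply]
      rw [if_pos (by omega : (a : ℕ) + 1 < n + 1)]
    rw [hmat]
    exact wronskian_ne_zero δ p⁻¹ (inv_ne_zero hp0) hδa hδm hδX
  have hsign : ∀ i : ℕ, i ≤ n → ((-1 : DRF C n)) ^ (n - i) = (-1) ^ (i + n) := by
    intro i hi
    have he : i + n = (n - i) + 2 * i := by omega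
    rw [he, pow_add, pow_mul, neg_one_sq, one_pow, mul_one]
  -- the homogeneous determinant identity on `Icc 1 (n+1)`
  have key : ∀ j : Fin n, ∑ i ∈ Finset.Icc 1 (n + 1),
      (-1 : DRF C n) ^ (n + 1 - i) * δ^[i] (XX C n j 0) * Wd δ i = 0 := by
    intro j
    have hd := det_identity δ j
    rw [Fin.sum_univ_eq_sum_range
      (fun r => (-1 : DRF C n) ^ (r + n) * δ^[r + 1] (XX C n j 0) * Wd δ (r + 1))
      (n + 1)] at hd
    rw [← Finset.Ico_add_one_right_eq_Icc, Finset.sum_Ico_eq_sum_range]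
    simp only [Nat.succ_sub_one, Nat.add_sub_cancel]
    refine Eq.trans ?_ hd
    apply Finset.sum_congr rfl
    intro i hi
    rw [Finset.mem_range] at hi
    have h1 : 1 + i = i + 1 := by omega
    rw [h1]
    have h2 : n + 1 - (i + 1) = n - i := by omega
    rw [h2, hsign i (by omega)]
  -- part (i)
  have part1 : ∀ j : Fin n, ∑ i ∈ Finset.Icc 1 (n + 1),
      (-1 : DRF C n) ^ (n + 1 - i) * (Wd δ i / Wd δ (n + 1)) * δ^[i] (XX C n j 0) = 0 := by
    intro j
    have hterm : ∀ i ∈ Finset.Icc 1 (n + 1),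
        (-1 : DRF C n) ^ (n + 1 - i) * (Wd δ i / Wd δ (n + 1)) * δ^[i] (XX C n j 0)
        = ((-1 : DRF C n) ^ (n + 1 - i) * δ^[i] (XX C n j 0) * Wd δ i)
          * (Wd δ (n + 1))⁻¹ := by
      intro i _
      rw [div_eq_mul_inv]; ring
    rw [Finset.sum_congr rfl hterm, ← Finset.sum_mul, key j, zero_mul]
  -- invariance machinery
  have hembconst : ∀ c : C, dF (emb c) = 0 := by
    intro c
    have hc : emb c ∈ Set.range emb := ⟨c, rfl⟩
    rw [hconst] at hc
    exact hc
  have hι_dK : ∀ a, ι (dK a) = dL (ι a) := by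
    apply derivLike_ext ι (fun a => ι (dK a)) (fun a => dL (ι a))
    · intro a b; rw [hdK_add, map_add]
    · intro a b; rw [hdK_mul, map_add, map_mul, map_mul]
    · intro a b; rw [map_add, hdL_add]
    · intro a b; rw [map_mul, hdL_mul]
    · intro q
      show ι (dK (XX C n q.1 q.2)) = dL (ι (XX C n q.1 q.2))
      rw [hdK_X, hι_X, hι_X, hdL_X]
    · intro c
      show ι (dK (CC C n c)) = dL (ι (CC C n c))
      rw [hdK_C, map_zero, hι_C, hdL_C, hembconst, map_zero]
  have hιp0 : ι p ≠ 0 := fun hc => hp0 (ι.injective (by rw [hc, map_zero]))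
  set δF : DRF F n → DRF F n := fun a => (ι p)⁻¹ * dL a with hδFdef
  have hιδ : ∀ a, ι (δ a) = δF (ι a) := by
    intro a; rw [hδ, map_mul, map_inv₀, hι_dK]
  have hιδk : ∀ (k : ℕ) (a : DRF C n), ι (δ^[k] a) = δF^[k] (ι a) := by
    intro k
    induction k with
    | zero => intro a; simp
    | succ k ih =>
      intro a
      rw [Function.iterate_succ_apply', Function.iterate_succ_apply', hιδ, ih]
  have hδF_add : ∀ a b, δF (a + b) = δF a + δF b := by
    intro a b
    show (ι p)⁻¹ * dL (a + b) = (ι p)⁻¹ * dL a + (ι p)⁻¹ * dL b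
    rw [hdL_add, mul_add]
  have hδFsum : ∀ (s : Finset (Fin n)) (f : Fin n → DRF F n),
      δF (∑ i ∈ s, f i) = ∑ i ∈ s, δF (f i) := fun s f =>
    map_sum (AddMonoidHom.mk' δF hδF_add) f s
  have hδF_C : ∀ c : C, δF (CC F n (emb c)) = 0 := by
    intro c
    show (ι p)⁻¹ * dL (CC F n (emb c)) = 0
    rw [hdL_C, hembconst, map_zero, mul_zero]
  have hδF_cmul : ∀ (c : C) (y : DRF F n),
      δF (CC F n (emb c) * y) = CC F n (emb c) * δF y := by
    intro c y
    show (ι p)⁻¹ * dL (CC F n (emb c) * y) = CC F n (emb c) * ((ι p)⁻¹ * dL y)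
    rw [hdL_mul, hdL_C, hembconst, map_zero, zero_mul, zero_add]
    ring
  have hcomm : ∀ (k : ℕ) (e : Fin n → C) (y : Fin n → DRF F n),
      δF^[k] (∑ c, CC F n (emb (e c)) * y c) = ∑ c, CC F n (emb (e c)) * δF^[k] (y c) := by
    intro k
    induction k with
    | zero => intro e y; simp
    | succ k ih =>
      intro e y
      rw [Function.iterate_succ_apply]
      have h1 : δF (∑ c, CC F n (emb (e c)) * y c)
          = ∑ c, CC F n (emb (e c)) * δF (y c) := by
        rw [hδFsum]
        exact Finset.sum_congr rfl fun c _ => hδF_cmul _ _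
      rw [h1, ih e (fun c => δF (y c))]
      exact Finset.sum_congr rfl fun c _ => by rw [← Function.iterate_succ_apply]
  -- the main invariance fact, for every substitution and every `i`
  have hWinv : ∀ (g : F), g ≠ 0 → ∀ (h : Matrix (Fin n) (Fin n) C), IsUnit h.det →
      ∀ (h₀ : Fin n → C), ∀ τ : DRF C n →+* DRF F n, IsSubst C F n emb dL g h h₀ τ →
      ∀ i : ℕ, τ (Wd δ i / Wd δ (n + 1)) = ι (Wd δ i / Wd δ (n + 1)) := by
    intro g hg h hdet h₀ τ hsub
    obtain ⟨hτC, hτX⟩ := hsub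
    have hg' : CC F n g ≠ 0 := fun hc => hg ((CC F n).injective (by rw [hc, map_zero]))
    have hτ_dK : ∀ a, τ (dK a) = (CC F n g)⁻¹ * dL (τ a) := by
      apply derivLike_ext τ (fun a => τ (dK a)) (fun a => (CC F n g)⁻¹ * dL (τ a))
      · intro a b; rw [hdK_add, map_add]
      · intro a b; rw [hdK_mul, map_add, map_mul, map_mul]
      · intro a b; rw [map_add, hdL_add, mul_add]
      · intro a b; rw [map_mul, hdL_mul]; ring
      · intro q
        show τ (dK (XX C n q.1 q.2)) = (CC F n g)⁻¹ * dL (τ (XX C n q.1 q.2))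
        rw [hdK_X, hτX, hτX, Function.iterate_succ_apply']
      · intro c
        show τ (dK (CC C n c)) = (CC F n g)⁻¹ * dL (τ (CC C n c))
        rw [hdK_C, map_zero, hτC, hdL_C, hembconst, map_zero, mul_zero]
    have hτp := hp_inv g hg h hdet h₀ τ ⟨hτC, hτX⟩
    have hτδ : ∀ a, τ (δ a) = δF (τ a) := by
      intro a
      rw [hδ, map_mul, map_inv₀, hτp, hτ_dK, mul_inv, inv_inv]
      show CC F n g * (ι p)⁻¹ * ((CC F n g)⁻¹ * dL (τ a)) = (ι p)⁻¹ * dL (τ a)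
      field_simp
    have hτδk : ∀ (k : ℕ) (a : DRF C n), τ (δ^[k] a) = δF^[k] (τ a) := by
      intro k
      induction k with
      | zero => intro a; simp
      | succ k ih =>
        intro a
        rw [Function.iterate_succ_apply', Function.iterate_succ_apply', hτδ, ih]
    have hXk : ∀ (b : Fin n) (k : ℕ), 1 ≤ k →
        τ (δ^[k] (XX C n b 0)) = ∑ c, CC F n (emb (h b c)) * ι (δ^[k] (XX C n c 0)) := by
      intro b k hk
      obtain ⟨k', rfl⟩ : ∃ k', k = k' + 1 := ⟨k - 1, by omega⟩
      rw [hτδk]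
      have hτx0 : τ (XX C n b 0)
          = (∑ c, CC F n (emb (h b c)) * XX F n c 0) + CC F n (emb (h₀ b)) := by
        rw [hτX b 0]
        rfl
      rw [hτx0, Function.iterate_succ_apply, hδF_add, hδF_C, add_zero]
      have h1 : δF (∑ c, CC F n (emb (h b c)) * XX F n c 0)
          = ∑ c, CC F n (emb (h b c)) * δF (XX F n c 0) := by
        rw [hδFsum]
        exact Finset.sum_congr rfl fun c _ => hδF_cmul _ _
      rw [h1, hcomm k' (fun c => h b c) (fun c => δF (XX F n c 0))]
      apply Finset.sum_congr rfl
      intro c _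
      rw [hιδk, hι_X, ← Function.iterate_succ_apply]
    have hdet0 : h.det ≠ 0 := hdet.ne_zero
    have hhe : CC F n (emb h.det) ≠ 0 := by
      intro hc
      have h2 : emb h.det = 0 := (CC F n).injective (by rw [hc, map_zero])
      exact hdet0 (emb.injective (by rw [h2, map_zero]))
    have hτW : ∀ i : ℕ, τ (Wd δ i) = ι (Wd δ i) * CC F n (emb h.det) := by
      intro i
      unfold Wd
      rw [RingHom.map_det, RingHom.map_det]
      have hmm : τ.mapMatrix (Matrix.of fun a b : Fin n =>
            δ^[if (a : ℕ) + 1 < i then (a : ℕ) + 1 else (a : ℕ) + 2] (XX C n b 0))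
          = (ι.mapMatrix (Matrix.of fun a b : Fin n =>
            δ^[if (a : ℕ) + 1 < i then (a : ℕ) + 1 else (a : ℕ) + 2] (XX C n b 0)))
            * Matrix.of (fun c b : Fin n => CC F n (emb (h b c))) := by
        ext a b
        rw [Matrix.mul_apply]
        simp only [RingHom.mapMatrix_apply, Matrix.map_apply, Matrix.of_apply]
        rw [hXk b _ (by split_ifs <;> omega)]
        exact Finset.sum_congr rfl fun c _ => by rw [mul_comm]
      rw [hmm, Matrix.det_mul]
      congr 1
      have h3 : Matrix.of (fun c b : Fin n => CC F n (emb (h b c)))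
          = ((CC F n).comp emb).mapMatrix h.transpose := by
        ext c b; rfl
      rw [h3, ← RingHom.map_det, Matrix.det_transpose]
      rfl
    intro i
    rw [map_div₀, map_div₀, hτW, hτW, mul_div_mul_right _ _ hhe]
  refine ⟨part1, fun i _ g hg h hdet h₀ τ hsub => hWinv g hg h hdet h₀ τ hsub i, ?_⟩
  -- part (iii)
  intro j
  refine ⟨∑ i ∈ Finset.Icc 1 (n + 1), MvPolynomial.C
    ((-1 : DRF C n) ^ (n + 1 - i) * (Wd δ i / Wd δ (n + 1))) * MvPolynomial.X i, ?_, ?_, ?_⟩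
  case _ =>
    intro hq
    have h1 : MvPolynomial.coeff (Finsupp.single (n + 1) 1)
        (∑ i ∈ Finset.Icc 1 (n + 1), MvPolynomial.C
          ((-1 : DRF C n) ^ (n + 1 - i) * (Wd δ i / Wd δ (n + 1))) * MvPolynomial.X i)
        = ∑ i ∈ Finset.Icc 1 (n + 1),
          ((-1 : DRF C n) ^ (n + 1 - i) * (Wd δ i / Wd δ (n + 1)))
            * (if Finsupp.single i 1 = Finsupp.single (n + 1) 1 then 1 else 0) := by
      rw [MvPolynomial.coeff_sum]
      exact Finset.sum_congr rfl fun i _ => by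
        rw [MvPolynomial.coeff_C_mul, MvPolynomial.coeff_X']
    rw [hq, MvPolynomial.coeff_zero] at h1
    rw [Finset.sum_eq_single (n + 1)] at h1
    · rw [if_pos rfl, mul_one, Nat.sub_self, pow_zero, one_mul, div_self hW0] at h1
      exact (one_ne_zero : (1 : DRF C n) ≠ 0) h1.symm
    · intro i _ hne
      rw [if_neg (fun hc => hne (Finsupp.single_left_injective one_ne_zero hc)), mul_zero]
    · intro hmem
      exact absurd (Finset.mem_Icc.mpr ⟨by omega, le_refl _⟩) hmem
  case _ =>
    intro mono
    simp only [Set.mem_setOf_eq]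
    intro g hg r hr τ hsub
    have hcoeff : MvPolynomial.coeff mono
        (∑ i ∈ Finset.Icc 1 (n + 1), MvPolynomial.C
          ((-1 : DRF C n) ^ (n + 1 - i) * (Wd δ i / Wd δ (n + 1))) * MvPolynomial.X i)
        = ∑ i ∈ Finset.Icc 1 (n + 1),
          ((-1 : DRF C n) ^ (n + 1 - i) * (Wd δ i / Wd δ (n + 1)))
            * (if Finsupp.single i 1 = mono then 1 else 0) := by
      rw [MvPolynomial.coeff_sum]
      exact Finset.sum_congr rfl fun i _ => by
        rw [MvPolynomial.coeff_C_mul, MvPolynomial.coeff_X']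
    rw [hcoeff, map_sum, map_sum]
    apply Finset.sum_congr rfl
    intro i _
    rw [map_mul, map_mul, map_mul, map_mul, map_pow, map_pow, map_neg, map_neg,
      map_one, map_one]
    rw [hWinv g hg r.1 (hH_GL r hr) r.2 τ hsub i]
    congr 1
    split_ifs
    · rw [map_one, map_one]
    · rw [map_zero, map_zero]
  case _ =>
    rw [map_sum]
    have he : ∀ i ∈ Finset.Icc 1 (n + 1),
        MvPolynomial.eval (fun k => δ^[k] (XX C n j 0))
          (MvPolynomial.C ((-1 : DRF C n) ^ (n + 1 - i) * (Wd δ i / Wd δ (n + 1)))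
            * MvPolynomial.X i)
        = (-1 : DRF C n) ^ (n + 1 - i) * (Wd δ i / Wd δ (n + 1)) * δ^[i] (XX C n j 0) := by
      intro i _
      rw [map_mul, MvPolynomial.eval_C, MvPolynomial.eval_X]
    rw [Finset.sum_congr rfl he]
    exact part1 j
end

section
/- Let C be a field of characteristic zero and x₁,...,xₙ differential indeterminates over C with derivation d. The n(n+1) + n elements of the system x, dx, d²x, ..., dⁿx (i.e., dʲxᵢ for 0 ≤ j ≤ n, 1 ≤ i ≤ n) are algebraically independent over the invariant field C⟨x,d⟩^{GL(n,C)⋉Cⁿ}. -/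
/-- `σ : C⟨x,d⟩ → C⟨x,d⟩` is the substitution `x ↦ hx+h₀` (fixing `d`). -/
def IsSubstH (C : Type) [Field C] (n : ℕ)
    (h : Matrix (Fin n) (Fin n) C) (h₀ : Fin n → C)
    (σ : DRF C n →+* DRF C n) : Prop :=
  (∀ c : C, σ (CC C n c) = CC C n c) ∧
  (∀ (i : Fin n) (k : ℕ),
    σ (XX C n i k) = (∑ j, CC C n (h i j) * XX C n j k)
      + (if k = 0 then CC C n (h₀ i) else 0))

open MvPolynomial
set_option synthInstance.maxHeartbeats 1000000
set_option maxHeartbeats 1000000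


theorem aux_density_fin {C K : Type*} [CommRing C] [Infinite C] [Field K]
    (ι : C →+* K) (hι : Function.Injective ι) :
    ∀ (m : ℕ) (p : MvPolynomial (Fin m) K),
      (∀ g : Fin m → C, eval (fun s => ι (g s)) p = 0) → p = 0 := by
  intro m
  induction m with
  | zero =>
    intro p hp
    obtain ⟨a, rfl⟩ := MvPolynomial.C_surjective (Fin 0) p
    have := hp (fun s => s.elim0)
    simpa using this
  | succ m ih =>
    intro p hp
    have key : ∀ g : Fin m → C,
        Polynomial.map (eval fun s => ι (g s)) (finSuccEquiv K m p) = 0 := by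
      intro g
      apply Polynomial.eq_zero_of_infinite_isRoot
      apply Set.Infinite.mono (s := Set.range ι) ?_ (Set.infinite_range_of_injective hι)
      rintro x ⟨c, rfl⟩
      have h1 : (fun s => ι ((Fin.cons c g : Fin (m+1) → C) s)) = Fin.cons (ι c) (fun s => ι (g s)) := by
        funext s
        refine Fin.cases ?_ ?_ s <;> simp
      have := hp (Fin.cons c g)
      rw [h1] at this
      rw [eval_eq_eval_mv_eval'] at this
      exact this
    have hz : finSuccEquiv K m p = 0 := by
      refine Polynomial.ext fun j => ?_
      rw [Polynomial.coeff_zero]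
      apply ih
      intro g
      have := key g
      have := congrArg (fun r => Polynomial.coeff r j) this
      simpa [Polynomial.coeff_map] using this
    have := (finSuccEquiv K m).injective (by simpa using hz)
    simpa using this

theorem aux_density {C K σ : Type*} [CommRing C] [Infinite C] [Field K] [Fintype σ]
    (ι : C →+* K) (hι : Function.Injective ι) (p : MvPolynomial σ K)
    (h : ∀ g : σ → C, eval (fun s => ι (g s)) p = 0) : p = 0 := by
  have e := Fintype.equivFin σ
  have hr : rename e p = 0 := by
    apply aux_density_fin ι hι
    intro g
    rw [eval_rename]
    exact h (fun s => g (e s))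
  have := rename_injective (R := K) e e.injective
  apply this
  simpa using hr


variable (C : Type) [Field C] (n : ℕ)

noncomputable def substH (h : Matrix (Fin n) (Fin n) C) (h₀ : Fin n → C) :
    MvPolynomial (Fin n × ℕ) C →+* MvPolynomial (Fin n × ℕ) C :=
  eval₂Hom MvPolynomial.C
    (fun p => (∑ j, MvPolynomial.C (h p.1 j) * MvPolynomial.X (j, p.2))
      + if p.2 = 0 then MvPolynomial.C (h₀ p.1) else 0)

lemma substH_C (h : Matrix (Fin n) (Fin n) C) (h₀ : Fin n → C) (c : C) :
    substH C n h h₀ (MvPolynomial.C c) = MvPolynomial.C c := by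
  simp [substH]

lemma substH_X (h : Matrix (Fin n) (Fin n) C) (h₀ : Fin n → C) (i : Fin n) (k : ℕ) :
    substH C n h h₀ (X (i, k)) =
      (∑ j, MvPolynomial.C (h i j) * X (j, k))
        + if k = 0 then MvPolynomial.C (h₀ i) else 0 := by
  simp [substH]

lemma substH_comp (h h' : Matrix (Fin n) (Fin n) C) (h₀ h₀' : Fin n → C) :
    (substH C n h' h₀').comp (substH C n h h₀)
      = substH C n (h * h') (fun i => h.mulVec h₀' i + h₀ i) := by
  apply MvPolynomial.ringHom_ext
  · intro c; simp [substH]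
  · rintro ⟨i, k⟩
    rw [RingHom.comp_apply, substH_X, substH_X, map_add, map_sum,
      apply_ite (substH C n h' h₀'), substH_C, map_zero]
    simp only [map_mul, substH_C, substH_X, Matrix.mul_apply, Matrix.mulVec,
      dotProduct, map_sum, map_mul, Finset.sum_mul, Finset.mul_sum,
      mul_add, Finset.sum_add_distrib, map_add, mul_assoc, mul_ite, mul_zero]
    rw [Finset.sum_comm]
    by_cases hk : k = 0 <;> simp [hk, Finset.sum_add_distrib] <;> ring

lemma substH_id : substH C n 1 0 = RingHom.id _ := by
  apply MvPolynomial.ringHom_ext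
  · intro c; simp [substH]
  · rintro ⟨i, k⟩
    simp [substH_X, Matrix.one_apply, apply_ite (MvPolynomial.C (σ := Fin n × ℕ)),
      ite_mul, Finset.sum_ite_eq]

lemma substH_injective (h : Matrix (Fin n) (Fin n) C) (h₀ : Fin n → C)
    (hu : IsUnit h.det) : Function.Injective (substH C n h h₀) := by
  have h1 : h * h⁻¹ = 1 := Matrix.mul_nonsing_inv h hu
  have h2 : (fun i => h.mulVec (-(h⁻¹.mulVec h₀)) i + h₀ i) = 0 := by
    funext i
    have : h.mulVec (h⁻¹.mulVec h₀) = h₀ := by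
      rw [Matrix.mulVec_mulVec, h1, Matrix.one_mulVec]
    simp [Matrix.mulVec_neg, this]
  have hcomp := substH_comp C n h h⁻¹ h₀ (-(h⁻¹.mulVec h₀))
  rw [h1, h2, substH_id] at hcomp
  intro a b hab
  have := congrArg (substH C n h⁻¹ (-(h⁻¹.mulVec h₀))) hab
  rw [← RingHom.comp_apply, ← RingHom.comp_apply, hcomp] at this
  simpa using this

noncomputable def sigmaH (h : Matrix (Fin n) (Fin n) C) (h₀ : Fin n → C)
    (hu : IsUnit h.det) : DRF C n →+* DRF C n :=
  IsFractionRing.lift (A := MvPolynomial (Fin n × ℕ) C)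
    (g := (algebraMap (MvPolynomial (Fin n × ℕ) C) (DRF C n)).comp (substH C n h h₀))
    (by
      rw [RingHom.coe_comp]
      exact (IsFractionRing.injective _ _).comp (substH_injective C n h h₀ hu))

lemma sigmaH_ap (h : Matrix (Fin n) (Fin n) C) (h₀ : Fin n → C) (hu : IsUnit h.det)
    (r : MvPolynomial (Fin n × ℕ) C) :
    sigmaH C n h h₀ hu (algebraMap _ (DRF C n) r)
      = algebraMap _ (DRF C n) (substH C n h h₀ r) := by
  rw [sigmaH, IsFractionRing.lift_algebraMap, RingHom.comp_apply]

lemma sigmaH_isSubst (h : Matrix (Fin n) (Fin n) C) (h₀ : Fin n → C) (hu : IsUnit h.det) :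
    IsSubstH C n h h₀ (sigmaH C n h h₀ hu) := by
  constructor
  · intro c
    simp only [CC, RingHom.coe_comp, Function.comp_apply]
    rw [sigmaH_ap, substH_C]
  · intro i k
    simp only [CC, XX, RingHom.coe_comp, Function.comp_apply]
    rw [sigmaH_ap, substH_X, map_add, map_sum]
    congr 1
    · refine Finset.sum_congr rfl fun j _ => ?_
      rw [map_mul]
    · rw [apply_ite (algebraMap (MvPolynomial (Fin n × ℕ) C) (DRF C n)), map_zero]

noncomputable def phiGen :
    MvPolynomial (Fin n × ℕ) C →+* MvPolynomial ((Fin n × Fin n) ⊕ Fin n) (DRF C n) :=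
  eval₂Hom ((MvPolynomial.C : DRF C n →+* _).comp (CC C n))
    (fun p => (∑ j, MvPolynomial.X (Sum.inl (p.1, j)) * MvPolynomial.C (XX C n j p.2))
      + if p.2 = 0 then MvPolynomial.X (Sum.inr p.1) else 0)

lemma phiGen_C (c : C) : phiGen C n (MvPolynomial.C c) = MvPolynomial.C (CC C n c) := by
  simp [phiGen]

lemma phiGen_X (i : Fin n) (k : ℕ) :
    phiGen C n (X (i, k)) =
      (∑ j, MvPolynomial.X (Sum.inl (i, j)) * MvPolynomial.C (XX C n j k))
        + if k = 0 then MvPolynomial.X (Sum.inr i) else 0 := by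
  simp [phiGen]

noncomputable def rhoGen :
    MvPolynomial ((Fin n × Fin n) ⊕ Fin n) (DRF C n) →+* DRF C n :=
  eval (Sum.elim (fun ij => if ij.1 = ij.2 then 1 else 0) (fun _ => 0))

lemma rhoGen_phiGen (r : MvPolynomial (Fin n × ℕ) C) :
    rhoGen C n (phiGen C n r) = algebraMap _ (DRF C n) r := by
  have : (rhoGen C n).comp (phiGen C n)
      = (algebraMap (MvPolynomial (Fin n × ℕ) C) (DRF C n)) := by
    apply MvPolynomial.ringHom_ext
    · intro c
      simp only [RingHom.coe_comp, Function.comp_apply, phiGen_C, rhoGen, eval_C, CC,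
        Function.comp_apply]
    · rintro ⟨i, k⟩
      simp only [RingHom.coe_comp, Function.comp_apply, phiGen_X, rhoGen, map_add, map_sum,
        map_mul, eval_C, eval_X, Sum.elim_inl, Sum.elim_inr, ite_mul, one_mul, zero_mul,
        apply_ite (eval (Sum.elim (fun ij : Fin n × Fin n => if ij.1 = ij.2 then (1 : DRF C n)
           else 0) (fun _ => 0)))]
      rw [Finset.sum_ite_eq]
      simp [XX]
  exact DFunLike.congr_fun this r

lemma phiGen_injective : Function.Injective (phiGen C n) := by
  intro a b hab
  have := congrArg (rhoGen C n) hab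
  rw [rhoGen_phiGen, rhoGen_phiGen] at this
  exact IsFractionRing.injective (MvPolynomial (Fin n × ℕ) C) (DRF C n) this

noncomputable def SigMap : DRF C n →+*
    FractionRing (MvPolynomial ((Fin n × Fin n) ⊕ Fin n) (DRF C n)) :=
  IsFractionRing.lift (A := MvPolynomial (Fin n × ℕ) C)
    (g := (algebraMap (MvPolynomial ((Fin n × Fin n) ⊕ Fin n) (DRF C n)) _).comp (phiGen C n))
    (by
      rw [RingHom.coe_comp]
      exact (IsFractionRing.injective _ _).comp (phiGen_injective C n))

noncomputable def iotaGen : DRF C n →+*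
    FractionRing (MvPolynomial ((Fin n × Fin n) ⊕ Fin n) (DRF C n)) :=
  (algebraMap (MvPolynomial ((Fin n × Fin n) ⊕ Fin n) (DRF C n)) _).comp MvPolynomial.C

lemma SigMap_ap (r : MvPolynomial (Fin n × ℕ) C) :
    SigMap C n (algebraMap _ (DRF C n) r) = algebraMap _ _ (phiGen C n r) := by
  rw [SigMap, IsFractionRing.lift_algebraMap, RingHom.comp_apply]

lemma CC_injective : Function.Injective (CC C n) := by
  rw [CC, RingHom.coe_comp]
  exact (IsFractionRing.injective _ _).comp (MvPolynomial.C_injective _ _)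

noncomputable def detHpoly : MvPolynomial ((Fin n × Fin n) ⊕ Fin n) (DRF C n) :=
  (Matrix.of fun i j : Fin n => (MvPolynomial.X (Sum.inl (i, j)) :
      MvPolynomial ((Fin n × Fin n) ⊕ Fin n) (DRF C n))).det

lemma detHpoly_ne_zero : detHpoly C n ≠ 0 := by
  intro h0
  have h1 : eval (Sum.elim (fun ij : Fin n × Fin n => if ij.1 = ij.2 then (1 : DRF C n) else 0)
      (fun _ => 0)) (detHpoly C n) = 1 := by
    rw [detHpoly, RingHom.map_det, RingHom.mapMatrix_apply]
    have : (Matrix.of fun i j : Fin n => (MvPolynomial.X (Sum.inl (i, j)) :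
        MvPolynomial ((Fin n × Fin n) ⊕ Fin n) (DRF C n))).map
        (eval (Sum.elim (fun ij : Fin n × Fin n => if ij.1 = ij.2 then (1 : DRF C n) else 0)
          (fun _ => 0))) = 1 := by
      ext i j
      simp [Matrix.one_apply]
    rw [this, Matrix.det_one]
  rw [h0, map_zero] at h1
  exact zero_ne_one h1

lemma eval_detHpoly (g : ((Fin n × Fin n) ⊕ Fin n) → C) :
    eval (fun v => CC C n (g v)) (detHpoly C n)
      = CC C n (Matrix.det (Matrix.of fun i j => g (Sum.inl (i, j)))) := by
  rw [detHpoly, RingHom.map_det, RingHom.map_det, RingHom.mapMatrix_apply,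
    RingHom.mapMatrix_apply]
  congr 1
  ext i j
  simp

variable [CharZero C]

lemma key_invariant (f : DRF C n)
    (hf : ∀ (h : Matrix (Fin n) (Fin n) C), IsUnit h.det →
      ∀ (h₀ : Fin n → C), ∀ σ : DRF C n →+* DRF C n, IsSubstH C n h h₀ σ → σ f = f) :
    SigMap C n f = iotaGen C n f := by
  obtain ⟨⟨p, q'⟩, hfq⟩ := IsLocalization.mk'_surjective
    (nonZeroDivisors (MvPolynomial (Fin n × ℕ) C)) f
  dsimp only at hfq
  set q : MvPolynomial (Fin n × ℕ) C := (q' : MvPolynomial (Fin n × ℕ) C) with hqdef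
  have hq : q ≠ 0 := nonZeroDivisors.coe_ne_zero q'
  have hfd : f = algebraMap _ (DRF C n) p / algebraMap _ (DRF C n) q := by
    rw [← hfq, IsFractionRing.mk'_eq_div]
  have hapq : algebraMap _ (DRF C n) q ≠ 0 :=
    fun hc => hq (IsFractionRing.injective _ _ (by rw [hc, map_zero]))
  -- the key polynomial identity
  set t : MvPolynomial ((Fin n × Fin n) ⊕ Fin n) (DRF C n) :=
    phiGen C n p * MvPolynomial.C (algebraMap _ (DRF C n) q)
      - phiGen C n q * MvPolynomial.C (algebraMap _ (DRF C n) p) with htdef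
  have ht : t = 0 := by
    have hmul : t * detHpoly C n = 0 := by
      apply aux_density (CC C n) (CC_injective C n)
      intro g
      rw [map_mul, eval_detHpoly]
      set h : Matrix (Fin n) (Fin n) C := Matrix.of fun i j => g (Sum.inl (i, j)) with hh
      by_cases hdet : IsUnit h.det
      · set σ := sigmaH C n h (fun i => g (Sum.inr i)) hdet with hσ
        have hsub : IsSubstH C n h (fun i => g (Sum.inr i)) σ := sigmaH_isSubst C n h (fun i => g (Sum.inr i)) hdet
        have hcomp : ∀ r : MvPolynomial (Fin n × ℕ) C,
            eval (fun v => CC C n (g v)) (phiGen C n r) = σ (algebraMap _ (DRF C n) r) := by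
          have : (eval (fun v => CC C n (g v))).comp (phiGen C n)
              = σ.comp (algebraMap (MvPolynomial (Fin n × ℕ) C) (DRF C n)) := by
            apply MvPolynomial.ringHom_ext
            · intro c
              have h1 : algebraMap (MvPolynomial (Fin n × ℕ) C) (DRF C n) (MvPolynomial.C c)
                  = CC C n c := rfl
              simp only [RingHom.coe_comp, Function.comp_apply, phiGen_C, eval_C, h1, hsub.1 c]
            · rintro ⟨i, k⟩
              have h1 : algebraMap (MvPolynomial (Fin n × ℕ) C) (DRF C n) (X (i, k))
                  = XX C n i k := rfl
              simp only [RingHom.coe_comp, Function.comp_apply, phiGen_X, h1, hsub.2 i k,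
                map_add, map_sum, map_mul, eval_C, eval_X,
                apply_ite (eval fun v => CC C n (g v)), map_zero]
              rfl
          exact fun r => DFunLike.congr_fun this r
        have hσq : σ (algebraMap _ (DRF C n) q) ≠ 0 :=
          fun hc => hapq (σ.injective (by rw [hc, map_zero]))
        have hff := hf h hdet _ σ hsub
        rw [hfd, map_div₀] at hff
        have hcross : σ (algebraMap _ (DRF C n) p) * algebraMap _ (DRF C n) q
            = σ (algebraMap _ (DRF C n) q) * algebraMap _ (DRF C n) p := by
          field_simp at hff
          linear_combination hff
        rw [htdef, map_sub, map_mul, map_mul, eval_C, eval_C, hcomp p, hcomp q]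
        rw [sub_mul]
        rw [hcross]
        ring
      · have : h.det = 0 := by
          by_contra hne
          exact hdet (isUnit_iff_ne_zero.mpr hne)
        rw [this, map_zero, mul_zero]
    rcases mul_eq_zero.mp hmul with h | h
    · exact h
    · exact absurd h (detHpoly_ne_zero C n)
  -- conclude
  have hphq : phiGen C n q ≠ 0 :=
    fun hc => hq (phiGen_injective C n (by rw [hc, map_zero]))
  have haq : (algebraMap (MvPolynomial ((Fin n × Fin n) ⊕ Fin n) (DRF C n)) _) (phiGen C n q)
      ≠ (0 : FractionRing (MvPolynomial ((Fin n × Fin n) ⊕ Fin n) (DRF C n))) :=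
    fun hc => hphq (IsFractionRing.injective _ _ (by rw [hc, map_zero]))
  have hCq : (MvPolynomial.C (algebraMap _ (DRF C n) q) :
      MvPolynomial ((Fin n × Fin n) ⊕ Fin n) (DRF C n)) ≠ 0 :=
    fun hc => hapq (MvPolynomial.C_injective _ _ (by rw [hc, map_zero]))
  have haCq : (algebraMap (MvPolynomial ((Fin n × Fin n) ⊕ Fin n) (DRF C n)) _)
      (MvPolynomial.C (algebraMap _ (DRF C n) q))
      ≠ (0 : FractionRing (MvPolynomial ((Fin n × Fin n) ⊕ Fin n) (DRF C n))) :=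
    fun hc => hCq (IsFractionRing.injective _ _ (by rw [hc, map_zero]))
  rw [htdef, sub_eq_zero] at ht
  have ht' := congrArg (algebraMap (MvPolynomial ((Fin n × Fin n) ⊕ Fin n) (DRF C n))
    (FractionRing (MvPolynomial ((Fin n × Fin n) ⊕ Fin n) (DRF C n)))) ht
  rw [map_mul, map_mul] at ht'
  rw [hfd, map_div₀, map_div₀, SigMap_ap, SigMap_ap]
  rw [iotaGen, RingHom.comp_apply, RingHom.comp_apply]
  rw [div_eq_div_iff haq haCq]
  linear_combination ht'

lemma detM_isUnit : IsUnit (Matrix.of fun i j : Fin n => XX C n i ((j : ℕ) + 1)).det := by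
  rw [isUnit_iff_ne_zero]
  have h1 : (Matrix.of fun i j : Fin n => XX C n i ((j : ℕ) + 1)) =
      ((algebraMap (MvPolynomial (Fin n × ℕ) C) (DRF C n)).mapMatrix
        (Matrix.of fun i j : Fin n => X (i, (j : ℕ) + 1))) := by
    ext i j
    rfl
  rw [h1, ← RingHom.map_det]
  intro hc
  have h2 : (Matrix.of fun i j : Fin n => (X (i, (j : ℕ) + 1) :
      MvPolynomial (Fin n × ℕ) C)).det = 0 :=
    IsFractionRing.injective (MvPolynomial (Fin n × ℕ) C) (DRF C n)
      (hc.trans (map_zero _).symm)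
  have h3 : eval (fun p : Fin n × ℕ => if (p.1 : ℕ) + 1 = p.2 then (1 : C) else 0)
      (Matrix.of fun i j : Fin n => (X (i, (j : ℕ) + 1) :
        MvPolynomial (Fin n × ℕ) C)).det = 1 := by
    rw [RingHom.map_det, RingHom.mapMatrix_apply]
    have h4 : (Matrix.of fun i j : Fin n => (X (i, (j : ℕ) + 1) :
        MvPolynomial (Fin n × ℕ) C)).map
        (eval (fun p : Fin n × ℕ => if (p.1 : ℕ) + 1 = p.2 then (1 : C) else 0)) = 1 := by
      ext i j
      simp [Matrix.one_apply, Fin.val_inj]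
    rw [h4, Matrix.det_one]
  rw [h2, map_zero] at h3
  exact zero_ne_one h3

noncomputable def PsiMap : MvPolynomial (Fin n × Fin (n + 1)) (DRF C n) →+*
    MvPolynomial ((Fin n × Fin n) ⊕ Fin n) (DRF C n) :=
  eval₂Hom MvPolynomial.C (fun pr => phiGen C n (X (pr.1, (pr.2 : ℕ))))

lemma PsiMap_C (f : DRF C n) : PsiMap C n (MvPolynomial.C f) = MvPolynomial.C f := by
  simp [PsiMap]

lemma PsiMap_X (pr : Fin n × Fin (n + 1)) :
    PsiMap C n (X pr) = phiGen C n (X (pr.1, (pr.2 : ℕ))) := by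
  simp [PsiMap]

lemma PsiMap_monomial (m : Fin n × Fin (n + 1) →₀ ℕ) (f : DRF C n) :
    PsiMap C n (monomial m f)
      = MvPolynomial.C f * m.prod fun pr e => phiGen C n (X (pr.1, (pr.2 : ℕ))) ^ e := by
  rw [PsiMap, eval₂Hom_monomial]

theorem stmt_13' (dK : DRF C n → DRF C n)
    (hdK_X : ∀ i k, dK (XX C n i k) = XX C n i (k + 1)) :
    ∀ q : MvPolynomial (Fin n × Fin (n + 1)) (DRF C n),
      (∀ mono, MvPolynomial.coeff mono q ∈
        {f : DRF C n | ∀ (h : Matrix (Fin n) (Fin n) C), IsUnit h.det →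
          ∀ (h₀ : Fin n → C), ∀ σ : DRF C n →+* DRF C n,
            IsSubstH C n h h₀ σ → σ f = f}) →
      MvPolynomial.eval (fun pr : Fin n × Fin (n + 1) =>
        dK^[(pr.2 : ℕ)] (XX C n pr.1 0)) q = 0 →
      q = 0 := by
  intro q hcoeff heval
  -- Step A : rewrite the evaluation point
  have hiter : ∀ (k m : ℕ) (i : Fin n), dK^[k] (XX C n i m) = XX C n i (m + k) := by
    intro k
    induction k with
    | zero => intro m i; simp
    | succ k ih =>
      intro m i
      rw [Function.iterate_succ_apply, hdK_X, ih]
      congr 1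
      omega
  have heval' : eval (fun pr : Fin n × Fin (n + 1) => XX C n pr.1 (pr.2 : ℕ)) q = 0 := by
    have hfun : (fun pr : Fin n × Fin (n + 1) => dK^[(pr.2 : ℕ)] (XX C n pr.1 0))
        = fun pr : Fin n × Fin (n + 1) => XX C n pr.1 (pr.2 : ℕ) := by
      funext pr
      rw [hiter, Nat.zero_add]
    rwa [hfun] at heval
  -- Step B : transfer through the generic substitution
  have hPsi0 : PsiMap C n q = 0 := by
    apply IsFractionRing.injective (MvPolynomial ((Fin n × Fin n) ⊕ Fin n) (DRF C n))
      (FractionRing (MvPolynomial ((Fin n × Fin n) ⊕ Fin n) (DRF C n)))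
    rw [map_zero]
    have expand : (algebraMap (MvPolynomial ((Fin n × Fin n) ⊕ Fin n) (DRF C n))
        (FractionRing (MvPolynomial ((Fin n × Fin n) ⊕ Fin n) (DRF C n)))) (PsiMap C n q)
        = SigMap C n (eval (fun pr : Fin n × Fin (n + 1) => XX C n pr.1 (pr.2 : ℕ)) q) := by
      conv_lhs => rw [as_sum q]
      conv_rhs => rw [as_sum q]
      rw [map_sum, map_sum, map_sum, map_sum]
      refine Finset.sum_congr rfl fun m hm => ?_
      rw [PsiMap_monomial, eval_monomial, map_mul, map_mul]
      congr 1
      · rw [key_invariant C n _ (hcoeff m), iotaGen, RingHom.comp_apply]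
      · rw [Finsupp.prod, Finsupp.prod, map_prod, map_prod]
        refine Finset.prod_congr rfl fun pr _ => ?_
        rw [map_pow, map_pow]
        congr 1
        have hXX : XX C n pr.1 (pr.2 : ℕ)
            = algebraMap (MvPolynomial (Fin n × ℕ) C) (DRF C n) (X (pr.1, (pr.2 : ℕ))) := rfl
        rw [hXX, SigMap_ap]
    rw [expand, heval', map_zero]
  -- Step C : specialize to arbitrary C-points
  apply aux_density (CC C n) (CC_injective C n)
  intro γ
  set M : Matrix (Fin n) (Fin n) (DRF C n) :=
    Matrix.of fun i j : Fin n => XX C n i ((j : ℕ) + 1) with hM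
  have hMdet : IsUnit M.det := detM_isUnit C n
  set N : Matrix (Fin n) (Fin n) (DRF C n) :=
    (Matrix.of fun i j : Fin n => CC C n (γ (i, j.succ))) * M⁻¹ with hN
  set w : ((Fin n × Fin n) ⊕ Fin n) → DRF C n :=
    Sum.elim (fun ij => N ij.1 ij.2)
      (fun i => CC C n (γ (i, 0)) - ∑ j, N i j * XX C n j 0) with hw
  have hcomp : (eval w).comp (PsiMap C n)
      = (eval (fun s => CC C n (γ s)) :
          MvPolynomial (Fin n × Fin (n + 1)) (DRF C n) →+* DRF C n) := by
    apply MvPolynomial.ringHom_ext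
    · intro f
      simp only [RingHom.coe_comp, Function.comp_apply, PsiMap_C, eval_C]
    · rintro ⟨i, k⟩
      simp only [RingHom.coe_comp, Function.comp_apply, PsiMap_X, eval_X]
      rw [phiGen_X, map_add, map_sum]
      refine Fin.cases ?_ ?_ k
      · rw [Fin.val_zero, if_pos rfl]
        simp only [map_mul, eval_X, eval_C, hw, Sum.elim_inl, Sum.elim_inr]
        ring
      · intro l
        rw [Fin.val_succ, if_neg (Nat.succ_ne_zero _), map_zero, add_zero]
        simp only [map_mul, eval_X, eval_C, hw, Sum.elim_inl]
        have hcol : (∑ j, N i j * XX C n j ((l : ℕ) + 1))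
            = (N * M) i l := by
          rw [Matrix.mul_apply]
          rfl
        rw [hcol, hN, Matrix.mul_assoc, Matrix.nonsing_inv_mul M hMdet, Matrix.mul_one]
        rfl
  have := DFunLike.congr_fun hcomp q
  rw [RingHom.comp_apply, hPsi0, map_zero] at this
  exact this.symm

/-- the `n(n+1)+n` elements `x, dx, d²x, …, dⁿx` (i.e. `dʲxᵢ` for
`0 ≤ j ≤ n`, `1 ≤ i ≤ n`) are algebraically independent over the invariant field
`C⟨x,d⟩^{GL(n,C)⋉Cⁿ}`: any polynomial with `GL(n,C)⋉Cⁿ`-invariant coefficients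
vanishing at them is the zero polynomial. -/
theorem stmt_13 (C : Type) [Field C] [CharZero C]
    (n : ℕ) (hn : 1 < n)
    (dK : DRF C n → DRF C n)
    (hdK_add : ∀ a b, dK (a + b) = dK a + dK b)
    (hdK_mul : ∀ a b, dK (a * b) = dK a * b + a * dK b)
    (hdK_X : ∀ i k, dK (XX C n i k) = XX C n i (k + 1))
    (hdK_C : ∀ c : C, dK (CC C n c) = 0) :
    ∀ q : MvPolynomial (Fin n × Fin (n + 1)) (DRF C n),
      (∀ mono, MvPolynomial.coeff mono q ∈
        {f : DRF C n | ∀ (h : Matrix (Fin n) (Fin n) C), IsUnit h.det →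
          ∀ (h₀ : Fin n → C), ∀ σ : DRF C n →+* DRF C n,
            IsSubstH C n h h₀ σ → σ f = f}) →
      MvPolynomial.eval (fun pr : Fin n × Fin (n + 1) =>
        dK^[(pr.2 : ℕ)] (XX C n pr.1 0)) q = 0 →
      q = 0 := by
  intro q h1 h2
  exact stmt_13' C n dK hdK_X q h1 h2
end

section
/- Let C be a field of characteristic zero and x₁,...,xₙ differential indeterminates. Then C⟨x,d⟩ = C⟨x,d⟩^{GL(n,C)⋉Cⁿ}(x, dx, d²x, ..., dⁿx), i.e., the whole differential rational function field is generated as an ordinary field over the affine-invariant subfield by x and its derivatives up to order n. -/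
lemma dK_iter (C : Type) [Field C] (n : ℕ) (dK : DRF C n → DRF C n)
    (hdK_X : ∀ i k, dK (XX C n i k) = XX C n i (k + 1)) (i : Fin n) :
    ∀ (k m : ℕ), dK^[k] (XX C n i m) = XX C n i (m + k)
  | 0, m => by simp
  | (k+1), m => by
      rw [Function.iterate_succ_apply, hdK_X, dK_iter C n dK hdK_X i k (m+1)]
      congr 1
      omega

set_option maxHeartbeats 1000000 in
/-- `C⟨x,d⟩ = C⟨x,d⟩^{GL(n,C)⋉Cⁿ}(x, dx, …, dⁿx)`: the whole field of
differential rational functions is generated, as an ordinary field, by the affine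
invariants together with `x` and its derivatives up to order `n`. -/
theorem stmt_14 (C : Type) [Field C] [CharZero C]
    (n : ℕ) (hn : 1 < n)
    (dK : DRF C n → DRF C n)
    (hdK_add : ∀ a b, dK (a + b) = dK a + dK b)
    (hdK_mul : ∀ a b, dK (a * b) = dK a * b + a * dK b)
    (hdK_X : ∀ i k, dK (XX C n i k) = XX C n i (k + 1))
    (hdK_C : ∀ c : C, dK (CC C n c) = 0) :
    Subfield.closure
      ({f : DRF C n | ∀ (h : Matrix (Fin n) (Fin n) C), IsUnit h.det →
          ∀ (h₀ : Fin n → C), ∀ σ : DRF C n →+* DRF C n,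
            IsSubstH C n h h₀ σ → σ f = f}
        ∪ Set.range (fun pr : Fin n × Fin (n + 1) => dK^[(pr.2 : ℕ)] (XX C n pr.1 0)))
      = ⊤ := by
  set S : Set (DRF C n) :=
    ({f : DRF C n | ∀ (h : Matrix (Fin n) (Fin n) C), IsUnit h.det →
          ∀ (h₀ : Fin n → C), ∀ σ : DRF C n →+* DRF C n,
            IsSubstH C n h h₀ σ → σ f = f}
        ∪ Set.range (fun pr : Fin n × Fin (n + 1) => dK^[(pr.2 : ℕ)] (XX C n pr.1 0))) with hS
  set F := Subfield.closure S with hF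
  -- derivatives up to order n are in F
  have hXle : ∀ (i : Fin n) (k : ℕ), k ≤ n → XX C n i k ∈ F := by
    intro i k hk
    apply Subfield.subset_closure
    right
    exact ⟨(i, ⟨k, by omega⟩), by simp [dK_iter C n dK hdK_X]⟩
  -- constants are in F
  have hCmem : ∀ c : C, CC C n c ∈ F := by
    intro c
    apply Subfield.subset_closure
    left
    intro h _ h₀ σ hσ
    exact hσ.1 c
  -- all derivatives are in F
  have hXmem : ∀ (i : Fin n) (k : ℕ), XX C n i k ∈ F := by
    intro i k
    by_cases hk : k ≤ n
    · exact hXle i k hk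
    push_neg at hk
    -- the matrix A with A i a = d^(a+1) x_i
    set P : Matrix (Fin n) (Fin n) (MvPolynomial (Fin n × ℕ) C) :=
      fun i a => MvPolynomial.X (i, (a : ℕ) + 1) with hP
    set φ := algebraMap (MvPolynomial (Fin n × ℕ) C) (DRF C n) with hφ
    set A : Matrix (Fin n) (Fin n) (DRF C n) := φ.mapMatrix P with hA
    have hAentry : ∀ i a, A i a = XX C n i ((a : ℕ) + 1) := by
      intro i a; simp only [hA, RingHom.mapMatrix_apply, Matrix.map_apply]; simp [hP, hφ, XX, RingHom.mapMatrix_apply, Matrix.map_apply]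
    have hPdet : P.det ≠ 0 := by
      intro hc
      have h2 := congrArg
        (MvPolynomial.eval (fun p : Fin n × ℕ => if p.2 = (p.1 : ℕ) + 1 then (1:C) else 0)) hc
      rw [map_zero, RingHom.map_det] at h2
      have h3 : (MvPolynomial.eval
          (fun p : Fin n × ℕ => if p.2 = (p.1 : ℕ) + 1 then (1:C) else 0)).mapMatrix P
          = (1 : Matrix (Fin n) (Fin n) C) := by
        ext i a
        by_cases hia : i = a
        · subst hia; simp only [RingHom.mapMatrix_apply, Matrix.map_apply]; simp [hP, RingHom.mapMatrix_apply, Matrix.map_apply]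
        · have : (a : ℕ) + 1 ≠ (i : ℕ) + 1 := by
            intro e
            exact hia (Fin.val_injective (by omega : (i:ℕ) = (a:ℕ)))
          simp only [RingHom.mapMatrix_apply, Matrix.map_apply]
          simp [hP, RingHom.mapMatrix_apply, Matrix.map_apply, Matrix.one_apply, hia, this, Fin.val_inj, Ne.symm hia]
      rw [h3, Matrix.det_one] at h2
      exact one_ne_zero h2
    have hAdet : IsUnit A.det := by
      rw [isUnit_iff_ne_zero, hA, ← RingHom.map_det]
      intro hc
      exact hPdet (IsFractionRing.injective (MvPolynomial (Fin n × ℕ) C) (DRF C n)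
        (by rw [hc, map_zero]))
    set v : Fin n → DRF C n := fun j => XX C n j k with hv
    set c : Fin n → DRF C n := A⁻¹.mulVec v with hc
    -- the coefficients c are affine invariants
    have hcinv : ∀ a, c a ∈ S := by
      intro a
      left
      intro h hdet h₀ σ hσ
      set H : Matrix (Fin n) (Fin n) (DRF C n) := (CC C n).mapMatrix h with hH
      have hHdet : IsUnit H.det := by
        rw [hH, ← RingHom.map_det]
        exact hdet.map (CC C n)
      have hσA : σ.mapMatrix A = H * A := by
        ext j a
        rw [RingHom.mapMatrix_apply, Matrix.map_apply, hAentry, hσ.2 j ((a : ℕ) + 1)]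
        simp [hH, Matrix.mul_apply, RingHom.mapMatrix_apply, Matrix.map_apply, hAentry]
      have hσAinv : σ.mapMatrix A⁻¹ = A⁻¹ * H⁻¹ := by
        have h1 : (H * A) * σ.mapMatrix A⁻¹ = 1 := by
          rw [← hσA, ← map_mul, Matrix.mul_nonsing_inv A hAdet, map_one]
        have h2 := Matrix.inv_eq_right_inv h1
        rw [Matrix.mul_inv_rev] at h2
        exact h2.symm
      have hσv : ∀ j, σ (v j) = H.mulVec v j := by
        intro j
        rw [hv]
        rw [hσ.2 j k, if_neg (by omega)]
        simp [hH, Matrix.mulVec, dotProduct, RingHom.mapMatrix_apply, Matrix.map_apply]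
      calc σ (c a) = ∑ j, σ (A⁻¹ a j) * σ (v j) := by
            rw [hc]; simp [Matrix.mulVec, dotProduct, map_sum, map_mul]
        _ = ((A⁻¹ * H⁻¹).mulVec (H.mulVec v)) a := by
            simp only [Matrix.mulVec, dotProduct, ← hσAinv, RingHom.mapMatrix_apply,
              Matrix.map_apply]
            congr 1
            ext j
            rw [hσv j]
            simp [Matrix.mulVec, dotProduct]
        _ = c a := by
            rw [Matrix.mulVec_mulVec, mul_assoc, Matrix.nonsing_inv_mul H hHdet, mul_one, hc]
    -- express XX i k = ∑ a, A i a * c a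
    have key : XX C n i k = ∑ a, A i a * c a := by
      have : A.mulVec c = v := by
        rw [hc, Matrix.mulVec_mulVec, Matrix.mul_nonsing_inv A hAdet, Matrix.one_mulVec]
      have h4 : A.mulVec c i = XX C n i k := congrFun this i
      rw [← h4]
      simp [Matrix.mulVec, dotProduct]
    rw [key]
    apply Subfield.sum_mem
    intro a _
    exact Subfield.mul_mem _ (by rw [hAentry]; exact hXle i _ (by omega))
      (Subfield.subset_closure (hcinv a))
  -- now conclude: every element of the fraction field is in F
  rw [eq_top_iff]
  intro z _
  obtain ⟨p, q, hq, hz⟩ := IsFractionRing.div_surjective (A := MvPolynomial (Fin n × ℕ) C) z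
  have hpoly : ∀ p : MvPolynomial (Fin n × ℕ) C,
      algebraMap (MvPolynomial (Fin n × ℕ) C) (DRF C n) p ∈ F := by
    intro p
    induction p using MvPolynomial.induction_on with
    | C a => exact hCmem a
    | add p q hp hq => rw [map_add]; exact Subfield.add_mem _ hp hq
    | mul_X p s hp =>
        rw [map_mul]
        refine Subfield.mul_mem _ hp ?_
        obtain ⟨i0, k0⟩ := s
        exact hXmem i0 k0
  rw [← hz]
  exact Subfield.div_mem _ (hpoly p) (hpoly q)
end

section
/- Let C be a field of characteristic zero, H a group, and suppose for each h ∈ H a polynomial φ_h[t] = Σ_{i=0}^{k} φᵢ(h)tⁱ ∈ C[t] and a fixed monic polynomial a[t] ∈ C[t] satisfy φ_{h₁}[t]·φ_{h₂}[t] = φ_{h₁h₂}[t]·a[t] for all h₁,h₂ ∈ H, with φ_k(h₁) ≠ 0 for some h₁. Then deg φ_h = deg a for all h ∈ H, a[t] divides φ_h[t] for all h, and φ_h[t] = φ_k(h)·a[t]; moreover φ_k: H → C* is a group homomorphism. -/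
open UniqueFactorizationMonoid in
lemma aux_dvd_of_pow {R : Type*} [CommMonoidWithZero R] [UniqueFactorizationMonoid R]
    {a b : R} (ha : a ≠ 0) (hb : b ≠ 0) (H : ∀ n : ℕ, a ^ n ∣ b ^ (n + 1)) : a ∣ b := by
  classical
  letI := UniqueFactorizationMonoid.normalizationMonoid (α := R)
  rw [dvd_iff_normalizedFactors_le_normalizedFactors ha hb, Multiset.le_iff_count]
  intro p
  set m := (normalizedFactors a).count p with hm
  set μ := (normalizedFactors b).count p with hμ
  have h1 := (dvd_iff_normalizedFactors_le_normalizedFactors (pow_ne_zero m ha)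
      (pow_ne_zero (m + 1) hb)).mp (H m)
  have h2 := Multiset.le_iff_count.mp h1 p
  rw [normalizedFactors_pow, normalizedFactors_pow, Multiset.count_nsmul,
    Multiset.count_nsmul, ← hm, ← hμ] at h2
  nlinarith [h2]

/-- cocycle lemma. If a family of polynomials `φ h` of degree ≤ k over a
field `C` of characteristic zero, indexed by a group `H`, satisfies
`φ h₁ * φ h₂ = φ (h₁*h₂) * a` for a fixed monic polynomial `a`, and the `k`-th
coefficient is nonzero for some `h₁`, then `deg (φ h) = deg a`, `a ∣ φ h`,
`φ h = (coeff k (φ h)) • a` for all `h`, and `h ↦ coeff k (φ h)` is a homomorphism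
`H → C*` (multiplicative with all values nonzero). -/
theorem stmt_17 (C : Type) [Field C] [CharZero C] (H : Type) [Group H]
    (k : ℕ) (φ : H → Polynomial C) (a : Polynomial C)
    (hdeg : ∀ h : H, (φ h).degree ≤ (k : ℕ))
    (ha : a.Monic)
    (hmul : ∀ h₁ h₂ : H, φ h₁ * φ h₂ = φ (h₁ * h₂) * a)
    (h₁ : H) (hk : (φ h₁).coeff k ≠ 0) :
    (∀ h : H, (φ h).degree = a.degree) ∧
    (∀ h : H, a ∣ φ h) ∧
    (∀ h : H, φ h = Polynomial.C ((φ h).coeff k) * a) ∧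
    (∀ h : H, (φ h).coeff k ≠ 0) ∧
    (∀ g₁ g₂ : H, (φ (g₁ * g₂)).coeff k = (φ g₁).coeff k * (φ g₂).coeff k) := by
  classical
  have ha0 : a ≠ 0 := ha.ne_zero
  -- no φ h is zero
  have hne : ∀ h : H, φ h ≠ 0 := by
    intro h hzero
    have e := hmul h (h⁻¹ * h₁)
    rw [hzero, zero_mul, mul_inv_cancel_left] at e
    rcases mul_eq_zero.mp e.symm with h' | h'
    · exact hk (by rw [h']; simp)
    · exact ha0 h'
  -- φ 1 = a
  have hφ1 : φ 1 = a := by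
    have e := hmul 1 1
    rw [one_mul] at e
    exact mul_left_cancel₀ (hne 1) e
  have hDle : ∀ h : H, (φ h).natDegree ≤ k :=
    fun h => Polynomial.natDegree_le_iff_degree_le.mpr (hdeg h)
  have hDk : (φ h₁).natDegree = k :=
    Polynomial.natDegree_eq_of_degree_eq_some
      (le_antisymm (hdeg h₁) (Polynomial.le_degree_of_ne_zero hk))
  have key : ∀ g h : H, (φ g).natDegree + (φ h).natDegree
      = (φ (g * h)).natDegree + a.natDegree := by
    intro g h
    have e := congrArg Polynomial.natDegree (hmul g h)
    rwa [Polynomial.natDegree_mul (hne g) (hne h),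
      Polynomial.natDegree_mul (hne _) ha0] at e
  have hle : ∀ h : H, (φ h).natDegree ≤ a.natDegree := by
    intro h
    have e := key h₁ h
    have := hDle (h₁ * h)
    omega
  have hD1 : (φ 1).natDegree = a.natDegree := by rw [hφ1]
  have hDeq : ∀ h : H, (φ h).natDegree = a.natDegree := by
    intro h
    have e := key h h⁻¹
    rw [mul_inv_cancel, hD1] at e
    have := hle h
    have := hle h⁻¹
    omega
  have hAk : a.natDegree = k := by rw [← hDeq h₁, hDk]
  have hcoeff : ∀ h : H, (φ h).coeff k = (φ h).leadingCoeff := by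
    intro h
    rw [Polynomial.leadingCoeff, (hDeq h).trans hAk]
  have hcne : ∀ h : H, (φ h).coeff k ≠ 0 := by
    intro h
    rw [hcoeff h]
    exact Polynomial.leadingCoeff_ne_zero.mpr (hne h)
  -- powers
  have hpow : ∀ (h : H) (n : ℕ), (φ h) ^ (n + 1) = φ (h ^ (n + 1)) * a ^ n := by
    intro h n
    induction n with
    | zero => simp
    | succ n ih =>
      calc (φ h) ^ (n + 2) = (φ h) ^ (n + 1) * φ h := by ring
        _ = φ (h ^ (n + 1)) * a ^ n * φ h := by rw [ih]
        _ = (φ (h ^ (n + 1)) * φ h) * a ^ n := by ring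
        _ = (φ (h ^ (n + 1) * h) * a) * a ^ n := by rw [hmul]
        _ = φ (h ^ (n + 2)) * a ^ (n + 1) := by rw [← pow_succ]; ring
  have hdvd : ∀ h : H, a ∣ φ h := by
    intro h
    refine aux_dvd_of_pow ha0 (hne h) (fun n => ?_)
    exact Dvd.intro_left _ (hpow h n).symm
  have hform : ∀ h : H, φ h = Polynomial.C ((φ h).coeff k) * a := by
    intro h
    obtain ⟨q, hq⟩ := hdvd h
    have hq0 : q ≠ 0 := by rintro rfl; exact hne h (by simp [hq])
    have hqd : q.natDegree = 0 := by
      have := hDeq h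
      rw [hq, Polynomial.natDegree_mul ha0 hq0] at this
      omega
    obtain ⟨c, rfl⟩ := Polynomial.natDegree_eq_zero.mp hqd
    have hck : (φ h).coeff k = c := by
      rw [hq, mul_comm, Polynomial.coeff_C_mul, ← hAk, ← Polynomial.leadingCoeff,
        ha.leadingCoeff, mul_one]
    rw [hck, hq, mul_comm]
  refine ⟨?_, hdvd, hform, hcne, ?_⟩
  · intro h
    rw [Polynomial.degree_eq_natDegree (hne h), Polynomial.degree_eq_natDegree ha0, hDeq h]
  · intro g₁ g₂
    have e := congrArg Polynomial.leadingCoeff (hmul g₁ g₂)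
    rw [Polynomial.leadingCoeff_mul, Polynomial.leadingCoeff_mul, ha.leadingCoeff,
      mul_one] at e
    rw [hcoeff, hcoeff, hcoeff, e]
end
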